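/- arXiv:2511.18021 — 4 statements merged into one kernel-verified Lean document; each statement's English description precedes it below -/
import Mathlib

section
/- Every eigenvalue of a unital positive linear map on the space of operators on a finite-dimensional complex Hilbert space has modulus at most 1. -/
open Matrix
open scoped ComplexOrder

abbrev MatC (n : ℕ) := Matrix (Fin n) (Fin n) ℂ

/-- Complete positivity of a linear map on matrices: every matrix amplification
preserves positive semidefiniteness. -/
def IsCompletelyPositive {n : ℕ} (Φ : Module.End ℂ (MatC n)) : Prop :=
  ∀ (k : ℕ) (M : Matrix (Fin n × Fin k) (Fin n × Fin k) ℂ), M.PosSemidef →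
    (Matrix.of fun p q : Fin n × Fin k =>
      Φ (Matrix.of fun i j => M (i, p.2) (j, q.2)) p.1 q.1).PosSemidef

section Helpers

lemma diag_nonneg' {n : ℕ} {P : MatC n} (hP : P.PosSemidef) (i : Fin n) :
    0 ≤ P i i := by
  have h := hP.dotProduct_mulVec_nonneg (Pi.single i 1)
  simpa [mulVec_single, single_dotProduct, dotProduct, Pi.single_apply, apply_ite] using h

lemma offdiag_abs_le' {n : ℕ} {P : MatC n} (hP : P.PosSemidef) (i j : Fin n) :
    ‖P i j‖ ≤ ((P i i).re + (P j j).re) / 2 := by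
  rcases eq_or_ne (P i j) 0 with h0 | h0
  · have h1 := (Complex.nonneg_iff.mp (diag_nonneg' hP i)).1
    have h2 := (Complex.nonneg_iff.mp (diag_nonneg' hP j)).1
    simp [h0]; linarith
  · set a := P i j with ha
    set t : ℂ := -a / ‖a‖ with ht
    have habs : (‖a‖ : ℂ) ≠ 0 := by
      simpa using (norm_ne_zero_iff.mpr h0)
    set x : Fin n → ℂ := t • (Pi.single i (1:ℂ) : Fin n → ℂ) + (Pi.single j (1:ℂ) : Fin n → ℂ)
      with hxdef
    have hx := hP.dotProduct_mulVec_nonneg x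
    have hji : P j i = starRingEnd ℂ a := by
      rw [ha]; exact (Matrix.IsHermitian.apply hP.1 j i).symm
    have hform : star x ⬝ᵥ P *ᵥ x =
        (starRingEnd ℂ t) * t * P i i + (starRingEnd ℂ t) * P i j
          + t * P j i + P j j := by
      rw [hxdef, mulVec_add, mulVec_smul, mulVec_single, mulVec_single, star_add, star_smul,
        add_dotProduct, dotProduct_add, dotProduct_add, smul_dotProduct, smul_dotProduct]
      simp [single_dotProduct, dotProduct, Pi.single_apply, apply_ite, mul_comm]
      ring
    have hconj : starRingEnd ℂ t = -(starRingEnd ℂ a) / ‖a‖ := by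
      simp [ht, map_div₀, Complex.conj_ofReal]
    have hsq : (starRingEnd ℂ a) * a = (‖a‖ : ℂ) ^ 2 := by
      rw [mul_comm, Complex.mul_conj, Complex.normSq_eq_norm_sq]; push_cast; ring
    have e1 : starRingEnd ℂ t * t = 1 := by
      have h : starRingEnd ℂ t * t = (starRingEnd ℂ a * a) / (‖a‖ * ‖a‖) := by
        rw [hconj, ht]; ring
      rw [h, hsq, sq]; field_simp
    have e2 : starRingEnd ℂ t * a = -(‖a‖ : ℂ) := by
      have h : starRingEnd ℂ t * a = -((starRingEnd ℂ a) * a) / ‖a‖ := by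
        rw [hconj]; ring
      rw [h, hsq, sq]; field_simp
    have e3 : t * starRingEnd ℂ a = -(‖a‖ : ℂ) := by
      have h : t * starRingEnd ℂ a = -((starRingEnd ℂ a) * a) / ‖a‖ := by
        rw [ht]; ring
      rw [h, hsq, sq]; field_simp
    rw [hform, hji, e1, e2, e3] at hx
    have hre := (Complex.nonneg_iff.mp hx).1
    simp only [Complex.add_re, Complex.neg_re, Complex.ofReal_re, one_mul] at hre
    linarith

noncomputable def entSum {n : ℕ} (X : MatC n) : ℝ := ∑ i, ∑ j, ‖X i j‖

lemma entSum_nonneg {n : ℕ} (X : MatC n) : 0 ≤ entSum X :=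
  Finset.sum_nonneg fun _ _ => Finset.sum_nonneg fun _ _ => norm_nonneg _

lemma abs_entry_le_entSum {n : ℕ} (X : MatC n) (i j : Fin n) :
    ‖X i j‖ ≤ entSum X := by
  refine le_trans ?_ (Finset.single_le_sum (f := fun i => ∑ j, ‖X i j‖)
    (fun _ _ => Finset.sum_nonneg fun _ _ => norm_nonneg _) (Finset.mem_univ i))
  exact Finset.single_le_sum (f := fun j => ‖X i j‖)
    (fun _ _ => norm_nonneg _) (Finset.mem_univ j)

lemma quadform_abs_le {n : ℕ} (A : MatC n) (x : Fin n → ℂ) :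
    ‖star x ⬝ᵥ A *ᵥ x‖ ≤ entSum A * ∑ k, ‖x k‖ ^ 2 := by
  set S := ∑ m, ‖x m‖ ^ 2 with hSdef
  have hS : ∀ k l : Fin n, ‖x k‖ * ‖x l‖ ≤ S := by
    intro k l
    have hk : ‖x k‖ ^ 2 ≤ S :=
      Finset.single_le_sum (f := fun m => ‖x m‖ ^ 2)
        (fun _ _ => sq_nonneg _) (Finset.mem_univ k)
    have hl : ‖x l‖ ^ 2 ≤ S :=
      Finset.single_le_sum (f := fun m => ‖x m‖ ^ 2)
        (fun _ _ => sq_nonneg _) (Finset.mem_univ l)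
    nlinarith [sq_nonneg (‖x k‖ - ‖x l‖)]
  have step1 : ∀ k, ‖star x k * (A *ᵥ x) k‖ ≤
      ∑ l, ‖A k l‖ * (‖x k‖ * ‖x l‖) := by
    intro k
    rw [norm_mul, Pi.star_apply, RCLike.star_def, Complex.norm_conj]
    have h1 : ‖(A *ᵥ x) k‖ ≤ ∑ l, ‖A k l‖ * ‖x l‖ := by
      refine (norm_sum_le (E := ℂ) _ _).trans_eq ?_
      exact Finset.sum_congr rfl fun l _ => norm_mul _ _
    calc ‖x k‖ * ‖(A *ᵥ x) k‖
        ≤ ‖x k‖ * ∑ l, ‖A k l‖ * ‖x l‖ :=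
          mul_le_mul_of_nonneg_left h1 (norm_nonneg _)
      _ = ∑ l, ‖A k l‖ * (‖x k‖ * ‖x l‖) := by
          rw [Finset.mul_sum]; exact Finset.sum_congr rfl fun l _ => by ring
  calc ‖star x ⬝ᵥ A *ᵥ x‖
      ≤ ∑ k, ‖star x k * (A *ᵥ x) k‖ := norm_sum_le _ _
    _ ≤ ∑ k, ∑ l, ‖A k l‖ * (‖x k‖ * ‖x l‖) :=
        Finset.sum_le_sum fun k _ => step1 k
    _ ≤ ∑ k, ∑ l, ‖A k l‖ * S := by
        refine Finset.sum_le_sum fun k _ => Finset.sum_le_sum fun l _ => ?_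
        exact mul_le_mul_of_nonneg_left (hS k l) (norm_nonneg _)
    _ = entSum A * S := by
        rw [entSum, Finset.sum_mul]
        exact Finset.sum_congr rfl fun k _ => (Finset.sum_mul _ _ _).symm

lemma dominate {n : ℕ} {A : MatC n} (hA : A.IsHermitian) :
    (((entSum A : ℝ) : ℂ) • (1 : MatC n) - A).PosSemidef ∧
    (((entSum A : ℝ) : ℂ) • (1 : MatC n) + A).PosSemidef := by
  set C : ℝ := entSum A with hC
  have hone : (((C : ℝ) : ℂ) • (1 : MatC n)).IsHermitian := by
    simp [Matrix.IsHermitian, conjTranspose_smul, Complex.conj_ofReal]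
  have hxx : ∀ x : Fin n → ℂ, star x ⬝ᵥ x = ((∑ m, ‖x m‖ ^ 2 : ℝ) : ℂ) := by
    intro x
    rw [dotProduct]
    push_cast
    refine Finset.sum_congr rfl fun m _ => ?_
    rw [Pi.star_apply, RCLike.star_def, mul_comm, Complex.mul_conj, Complex.normSq_eq_norm_sq]
    push_cast; ring
  have hreal : ∀ x : Fin n → ℂ, star (star x ⬝ᵥ A *ᵥ x) = star x ⬝ᵥ A *ᵥ x := by
    intro x
    rw [← star_dotProduct, star_mulVec, ← dotProduct_mulVec, hA.eq]
  constructor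
  · refine .of_dotProduct_mulVec_nonneg (hone.sub hA) fun x => ?_
    rw [sub_mulVec, dotProduct_sub, smul_mulVec, one_mulVec, dotProduct_smul, hxx x]
    set s := star x ⬝ᵥ A *ᵥ x with hs
    set S := ∑ m, ‖x m‖ ^ 2 with hSdef
    have habs : ‖s‖ ≤ C * S := quadform_abs_le A x
    have him : s.im = 0 := by
      have h := hreal x
      rw [RCLike.star_def, Complex.conj_eq_iff_im] at h
      exact h
    have hre : s.re ≤ C * S :=
      le_trans (le_trans (le_abs_self _) (Complex.abs_re_le_norm s)) habs
    rw [Complex.nonneg_iff]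
    constructor
    · simp only [smul_eq_mul, Complex.sub_re, Complex.mul_re, Complex.ofReal_re,
        Complex.ofReal_im, zero_mul, sub_zero, mul_zero]
      linarith
    · simp [smul_eq_mul, him, Complex.sub_im, Complex.mul_im]
  · refine .of_dotProduct_mulVec_nonneg (hone.add hA) fun x => ?_
    rw [add_mulVec, dotProduct_add, smul_mulVec, one_mulVec, dotProduct_smul, hxx x]
    set s := star x ⬝ᵥ A *ᵥ x with hs
    set S := ∑ m, ‖x m‖ ^ 2 with hSdef
    have habs : ‖s‖ ≤ C * S := quadform_abs_le A x
    have him : s.im = 0 := by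
      have h := hreal x
      rw [RCLike.star_def, Complex.conj_eq_iff_im] at h
      exact h
    have hre : -(C * S) ≤ s.re := by
      have := le_trans (le_trans (neg_le_abs _) (Complex.abs_re_le_norm s)) habs
      linarith
    rw [Complex.nonneg_iff]
    constructor
    · simp only [smul_eq_mul, Complex.add_re, Complex.mul_re, Complex.ofReal_re,
        Complex.ofReal_im, zero_mul, sub_zero, mul_zero]
      linarith
    · simp [smul_eq_mul, him, Complex.add_im, Complex.mul_im]

lemma sandwich_bound {n : ℕ} {C : ℝ} {B : MatC n}
    (h₁ : (((C : ℝ) : ℂ) • (1 : MatC n) - B).PosSemidef)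
    (h₂ : (((C : ℝ) : ℂ) • (1 : MatC n) + B).PosSemidef)
    (i j : Fin n) : ‖B i j‖ ≤ 2 * C := by
  have hdiag : ∀ k : Fin n, (B k k).im = 0 ∧ -C ≤ (B k k).re ∧ (B k k).re ≤ C := by
    intro k
    have hk1 := Complex.nonneg_iff.mp (diag_nonneg' h₁ k)
    have hk2 := Complex.nonneg_iff.mp (diag_nonneg' h₂ k)
    simp only [Matrix.sub_apply, Matrix.add_apply, Matrix.smul_apply, one_apply_eq, smul_eq_mul, mul_one,
      Complex.sub_re, Complex.sub_im, Complex.add_re, Complex.add_im,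
      Complex.ofReal_re, Complex.ofReal_im] at hk1 hk2
    refine ⟨by linarith [hk1.2, hk2.2], by linarith [hk2.1], by linarith [hk1.1]⟩
  have hCnn : 0 ≤ C := by
    have h := hdiag i
    linarith [h.2.1, h.2.2]
  rcases eq_or_ne i j with rfl | hij
  · have h := hdiag i
    have : ‖B i i‖ = |(B i i).re| := by
      rw [Complex.norm_def, Complex.normSq_apply, h.1]
      rw [← Real.sqrt_sq_eq_abs]; ring_nf
    rw [this]
    rw [abs_le]
    constructor <;> [linarith [h.2.1]; linarith [h.2.2]]
  · have hod := offdiag_abs_le' h₁ i j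
    have hentry : (((C : ℝ) : ℂ) • (1 : MatC n) - B) i j = -(B i j) := by
      simp [Matrix.sub_apply, Matrix.smul_apply, one_apply_ne hij]
    have hdii : ((((C : ℝ) : ℂ) • (1 : MatC n) - B) i i).re = C - (B i i).re := by
      simp [Matrix.sub_apply, Matrix.smul_apply, one_apply_eq, Complex.sub_re]
    have hdjj : ((((C : ℝ) : ℂ) • (1 : MatC n) - B) j j).re = C - (B j j).re := by
      simp [Matrix.sub_apply, Matrix.smul_apply, one_apply_eq, Complex.sub_re]
    rw [hentry, norm_neg, hdii, hdjj] at hod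
    have hi := (hdiag i).2.1
    have hj := (hdiag j).2.1
    linarith

lemma posUnital_entry_bound {n : ℕ} (Ψ : Module.End ℂ (MatC n))
    (hpos : ∀ X : MatC n, X.PosSemidef → (Ψ X).PosSemidef) (hunit : Ψ 1 = 1)
    {A : MatC n} (hA : A.IsHermitian) (i j : Fin n) :
    ‖Ψ A i j‖ ≤ 2 * entSum A := by
  obtain ⟨h₁, h₂⟩ := dominate hA
  have k₁ : (((entSum A : ℝ) : ℂ) • (1 : MatC n) - Ψ A).PosSemidef := by
    have := hpos _ h₁
    rwa [map_sub, _root_.map_smul, hunit] at this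
  have k₂ : (((entSum A : ℝ) : ℂ) • (1 : MatC n) + Ψ A).PosSemidef := by
    have := hpos _ h₂
    rwa [map_add, _root_.map_smul, hunit] at this
  exact sandwich_bound k₁ k₂ i j

lemma entSum_herm_part_le {n : ℕ} (X : MatC n) :
    entSum (X + Xᴴ) ≤ 2 * entSum X ∧
    entSum ((-Complex.I) • (X - Xᴴ)) ≤ 2 * entSum X := by
  have key : ∀ Y : MatC n, (∀ i j, ‖Y i j‖ ≤
      ‖X i j‖ + ‖X j i‖) → entSum Y ≤ 2 * entSum X := by
    intro Y hY
    have : entSum Y ≤ ∑ i, ∑ j, (‖X i j‖ + ‖X j i‖) :=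
      Finset.sum_le_sum fun i _ => Finset.sum_le_sum fun j _ => hY i j
    refine this.trans_eq ?_
    have swap : ∑ i, ∑ j, ‖X j i‖ = entSum X := by
      rw [entSum]; exact Finset.sum_comm
    rw [Finset.sum_congr rfl (fun i _ => Finset.sum_add_distrib), Finset.sum_add_distrib,
      swap, two_mul, entSum]
  constructor
  · refine key _ fun i j => ?_
    calc ‖(X + Xᴴ) i j‖ = ‖X i j + starRingEnd ℂ (X j i)‖ := by
          simp [Matrix.add_apply, conjTranspose_apply]
      _ ≤ ‖X i j‖ + ‖starRingEnd ℂ (X j i)‖ := norm_add_le _ _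
      _ = ‖X i j‖ + ‖X j i‖ := by rw [Complex.norm_conj]
  · refine key _ fun i j => ?_
    calc ‖((-Complex.I) • (X - Xᴴ)) i j‖
        = ‖X i j - starRingEnd ℂ (X j i)‖ := by
          simp [Matrix.smul_apply, Matrix.sub_apply, conjTranspose_apply, _root_.map_mul, map_neg_eq_map,
            Complex.norm_I, smul_eq_mul]
      _ ≤ ‖X i j‖ + ‖starRingEnd ℂ (X j i)‖ := by
          have h := norm_add_le (X i j) (-(starRingEnd ℂ (X j i)))
          rw [norm_neg] at h
          simpa [sub_eq_add_neg] using h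
      _ = ‖X i j‖ + ‖X j i‖ := by rw [Complex.norm_conj]

end Helpers

/-- Every eigenvalue of a unital positive linear map on B(H) has modulus at most 1. -/
theorem eigenvalue_modulus_le_one {n : ℕ} (Φ : Module.End ℂ (MatC n))
    (hpos : ∀ X : MatC n, X.PosSemidef → (Φ X).PosSemidef) (hunit : Φ 1 = 1)
    (c : ℂ) (X : MatC n) (hX : X ≠ 0) (heig : Φ X = c • X) :
    ‖c‖ ≤ 1 := by
  -- powers of Φ are positive and unital
  have hk : ∀ k : ℕ, (∀ Y : MatC n, Y.PosSemidef → ((Φ ^ k) Y).PosSemidef) ∧ (Φ ^ k) 1 = 1 := by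
    intro k
    induction k with
    | zero => exact ⟨fun Y hY => by simpa using hY, by simp⟩
    | succ k ih =>
      refine ⟨fun Y hY => ?_, ?_⟩
      · rw [pow_succ, Module.End.mul_apply]
        exact ih.1 _ (hpos _ hY)
      · rw [pow_succ, Module.End.mul_apply, hunit, ih.2]
  have hiter : ∀ k : ℕ, (Φ ^ k) X = (c ^ k) • X := by
    intro k
    induction k with
    | zero => simp
    | succ k ih =>
      rw [pow_succ, Module.End.mul_apply, heig, _root_.map_smul, ih, smul_smul, pow_succ]
      ring_nf
  -- uniform entry bound for Φ^k X
  have bound : ∀ k : ℕ, ∀ i j : Fin n, ‖((Φ ^ k) X) i j‖ ≤ 4 * entSum X := by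
    intro k i j
    set Ψ := Φ ^ k with hΨ
    set A : MatC n := X + Xᴴ with hAdef
    set B : MatC n := (-Complex.I) • (X - Xᴴ) with hBdef
    have hA : A.IsHermitian := by
      rw [hAdef, Matrix.IsHermitian]
      ext a b
      simp [conjTranspose_apply, Matrix.add_apply]
      ring
    have hB : B.IsHermitian := by
      rw [hBdef, Matrix.IsHermitian]
      ext a b
      simp [conjTranspose_apply, Matrix.smul_apply, Matrix.sub_apply, smul_eq_mul, Complex.conj_I]
      ring
    have hdecomp : (2 : ℂ) • X = A + Complex.I • B := by
      rw [hAdef, hBdef, smul_smul]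
      have : Complex.I * -Complex.I = 1 := by
        rw [mul_neg, Complex.I_mul_I]; ring
      rw [this, one_smul, two_smul]
      abel
    have happ : (2 : ℂ) • Ψ X = Ψ A + Complex.I • Ψ B := by
      rw [← _root_.map_smul, hdecomp, map_add, _root_.map_smul]
    have hentry : (2 : ℂ) * (Ψ X i j) = Ψ A i j + Complex.I * Ψ B i j := by
      have h2 := congrArg (fun M : MatC n => M i j) happ
      simpa [Matrix.smul_apply, Matrix.add_apply, smul_eq_mul] using h2
    obtain ⟨hsA, hsB⟩ := entSum_herm_part_le X
    have hbA : ‖Ψ A i j‖ ≤ 2 * entSum A :=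
      posUnital_entry_bound Ψ (hk k).1 (hk k).2 hA i j
    have hbB : ‖Ψ B i j‖ ≤ 2 * entSum B :=
      posUnital_entry_bound Ψ (hk k).1 (hk k).2 hB i j
    have habs2 : 2 * ‖Ψ X i j‖ = ‖(2 : ℂ) * (Ψ X i j)‖ := by
      rw [norm_mul, Complex.norm_two]
    have hfin : ‖(2 : ℂ) * (Ψ X i j)‖ ≤ 8 * entSum X := by
      rw [hentry]
      calc ‖Ψ A i j + Complex.I * Ψ B i j‖
          ≤ ‖Ψ A i j‖ + ‖Complex.I * Ψ B i j‖ :=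
            norm_add_le _ _
        _ = ‖Ψ A i j‖ + ‖Ψ B i j‖ := by
            rw [norm_mul, Complex.norm_I, one_mul]
        _ ≤ 2 * entSum A + 2 * entSum B := add_le_add hbA hbB
        _ ≤ 2 * (2 * entSum X) + 2 * (2 * entSum X) := by
            have := hsA; have := hsB
            gcongr
        _ = 8 * entSum X := by ring
    rw [← habs2] at hfin
    linarith
  -- pick a nonzero entry of X
  have hex : ∃ i j : Fin n, X i j ≠ 0 := by
    by_contra h
    push_neg at h
    exact hX (by ext i j; simpa using h i j)
  obtain ⟨i, j, hij0⟩ := hex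
  have hXij : 0 < ‖X i j‖ := norm_pos_iff.mpr hij0
  have key : ∀ k : ℕ, ‖c‖ ^ k * ‖X i j‖ ≤ 4 * entSum X := by
    intro k
    have h := bound k i j
    rw [hiter k] at h
    have : ((c ^ k • X) : MatC n) i j = c ^ k * X i j := by
      simp [Matrix.smul_apply, smul_eq_mul]
    rw [this, norm_mul, norm_pow] at h
    exact h
  by_contra hc
  push_neg at hc
  obtain ⟨k, hkgt⟩ := pow_unbounded_of_one_lt (4 * entSum X / ‖X i j‖) hc
  have h1 := key k
  rw [div_lt_iff₀ hXij] at hkgt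
  linarith
end

section
/- If Φ is an idempotent unital completely positive map on B(H) (Φ² = Φ), then for all X, Y ∈ B(H): Φ(Φ(X)Φ(Y)) = Φ(Φ(X)Y) = Φ(XΦ(Y)). -/
open Matrix
open scoped ComplexOrder

lemma pos_of_cp {n : ℕ} {Φ : Module.End ℂ (MatC n)} (hCP : IsCompletelyPositive Φ)
    {A : MatC n} (hA : A.PosSemidef) : (Φ A).PosSemidef := by
  have h := hCP 1 (A.submatrix Prod.fst Prod.fst) (hA.submatrix _)
  have he : (Matrix.of fun p q : Fin n × Fin 1 =>
      Φ (Matrix.of fun i j => (A.submatrix Prod.fst Prod.fst) (i, p.2) (j, q.2)) p.1 q.1)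
      = (Φ A).submatrix Prod.fst Prod.fst := by
    ext p q
    simp [Matrix.submatrix]
    rfl
  rw [he] at h
  have h2 := h.submatrix (fun i : Fin n => (i, (0 : Fin 1)))
  have : ((Φ A).submatrix Prod.fst Prod.fst).submatrix
      (fun i : Fin n => (i, (0 : Fin 1))) (fun i : Fin n => (i, (0 : Fin 1))) = Φ A := by
    ext i j; simp [Matrix.submatrix]
  rwa [this] at h2

lemma eq_zero_of_forms {n : ℕ} (W : MatC n)
    (h : ∀ x : Fin n → ℂ, dotProduct (star x) (W *ᵥ x) = 0) : W = 0 := by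
  have hB : ∀ x y : Fin n → ℂ, dotProduct (star x) (W *ᵥ y) = 0 := by
    intro x y
    have h1 := h (x + y)
    have h2 := h (x + Complex.I • y)
    have hx := h x
    have hy := h y
    simp only [star_add, star_smul, Matrix.mulVec_add, Matrix.mulVec_smul,
      dotProduct_add, add_dotProduct, dotProduct_smul, smul_dotProduct,
      Complex.star_def, Complex.conj_I, smul_eq_mul, hx, hy] at h1 h2
    set a := dotProduct (star x) (W *ᵥ y)
    set b := dotProduct (star y) (W *ᵥ x)
    linear_combination h1/2 - Complex.I/2 * h2 + (a - b)/2 * Complex.I_mul_I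
  ext i j
  have := hB (Pi.single i 1) (Pi.single j 1)
  rw [Matrix.mulVec_single] at this
  have hs : star (Pi.single i 1 : Fin n → ℂ) = Pi.single i 1 := by
    ext k; by_cases hk : k = i <;> simp [Pi.single_apply, hk]
  rw [hs, single_dotProduct] at this
  simpa using this

def sumProdEquiv (n : ℕ) : (Fin n ⊕ Fin n) ≃ (Fin n × Fin 2) where
  toFun := Sum.elim (fun i => (i, 0)) (fun i => (i, 1))
  invFun := fun p => if p.2 = 0 then Sum.inl p.1 else Sum.inr p.1
  left_inv := by rintro (i | i) <;> simp
  right_inv := by rintro ⟨i, s⟩; fin_cases s <;> simp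

lemma block_psd {n : ℕ} {Φ : Module.End ℂ (MatC n)} (hCP : IsCompletelyPositive Φ)
    (a : MatC n) :
    (Matrix.of fun p q : Fin n × Fin 2 =>
      Φ ((![a, 1] p.2)ᴴ * (![a, 1] q.2)) p.1 q.1).PosSemidef := by
  set c : Fin 2 → MatC n := ![a, 1] with hc
  set M : Matrix (Fin n × Fin 2) (Fin n × Fin 2) ℂ :=
    Matrix.of fun p q => ((c p.2)ᴴ * (c q.2)) p.1 q.1 with hM
  have hMpsd : M.PosSemidef := by
    have : M = (Matrix.of fun (k : Fin n) (p : Fin n × Fin 2) => (c p.2) k p.1)ᴴ *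
        (Matrix.of fun (k : Fin n) (p : Fin n × Fin 2) => (c p.2) k p.1) := by
      ext p q
      simp [M, Matrix.mul_apply, Matrix.conjTranspose_apply]
    rw [this]
    exact posSemidef_conjTranspose_mul_self _
  have h := hCP 2 M hMpsd
  have he : (Matrix.of fun p q : Fin n × Fin 2 =>
      Φ (Matrix.of fun i j => M (i, p.2) (j, q.2)) p.1 q.1)
      = Matrix.of fun p q : Fin n × Fin 2 => Φ ((c p.2)ᴴ * (c q.2)) p.1 q.1 := by
    ext p q
    congr 1
  rwa [he] at h

lemma star_pres {n : ℕ} {Φ : Module.End ℂ (MatC n)} (hCP : IsCompletelyPositive Φ)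
    (a : MatC n) : Φ aᴴ = (Φ a)ᴴ := by
  have h := (block_psd hCP a).1
  ext i j
  have h2 := congrFun (congrFun h ((j, 1) : Fin n × Fin 2)) ((i, 0) : Fin n × Fin 2)
  simp only [Matrix.conjTranspose_apply, Matrix.of_apply] at h2
  -- h2 : star (Φ ((![a,1] 0)ᴴ * ![a,1] 1) j i) = Φ ((![a,1] 1)ᴴ * ![a,1] 0) i j
  simp only [Matrix.cons_val_zero, Matrix.cons_val_one, Matrix.head_cons,
    Matrix.conjTranspose_one, Matrix.mul_one, Matrix.one_mul] at h2
  rw [Matrix.conjTranspose_apply, ← h2, star_star]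

lemma schwarz {n : ℕ} {Φ : Module.End ℂ (MatC n)} (hCP : IsCompletelyPositive Φ)
    (hunit : Φ 1 = 1) (a : MatC n) :
    (Φ (aᴴ * a) - (Φ a)ᴴ * (Φ a)).PosSemidef := by
  have hN := (block_psd hCP a).submatrix (sumProdEquiv n)
  have heq : ((Matrix.of fun p q : Fin n × Fin 2 =>
        Φ ((![a, 1] p.2)ᴴ * (![a, 1] q.2)) p.1 q.1).submatrix (sumProdEquiv n) (sumProdEquiv n))
      = fromBlocks (Φ (aᴴ * a)) (Φ aᴴ) ((Φ aᴴ)ᴴ) 1 := by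
    ext (i | i) (j | j) <;>
      simp [sumProdEquiv, fromBlocks, star_pres hCP, hunit]
  rw [heq] at hN
  haveI : Invertible (1 : MatC n) := invertibleOne
  have h2 := (Matrix.PosDef.fromBlocks₂₂ (Φ (aᴴ * a)) (Φ aᴴ) Matrix.PosDef.one).mp hN
  simpa [star_pres hCP] using h2

lemma wlem {n : ℕ} {Φ : Module.End ℂ (MatC n)} (hCP : IsCompletelyPositive Φ)
    (hunit : Φ 1 = 1) (hidem : ∀ X : MatC n, Φ (Φ X) = Φ X)
    (b Z : MatC n) (hb : Φ b = b) (hZ : Φ Z = 0) :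
    Φ (b * Z + Zᴴ * bᴴ) = 0 := by
  have hbH : Φ bᴴ = bᴴ := by rw [star_pres hCP, hb]
  have hVpsd : (Φ (Zᴴ * Z)).PosSemidef :=
    pos_of_cp hCP (posSemidef_conjTranspose_mul_self Z)
  have ht : ∀ t : ℝ, ((t : ℂ) • Φ (b * Z + Zᴴ * bᴴ)
      + ((t : ℂ) * (t : ℂ)) • Φ (Zᴴ * Z)).PosSemidef := by
    intro t
    set a : MatC n := bᴴ + (t : ℂ) • Z with ha
    have hΦa : Φ a = bᴴ := by
      rw [ha, map_add, _root_.map_smul, hZ, smul_zero, add_zero, hbH]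
    have hS := pos_of_cp hCP (schwarz hCP hunit a)
    have haH : aᴴ = b + (t : ℂ) • Zᴴ := by
      rw [ha, conjTranspose_add, conjTranspose_smul, conjTranspose_conjTranspose]
      norm_num
    have hmul : aᴴ * a = b * bᴴ + ((t : ℂ) • (b * Z) + (t : ℂ) • (Zᴴ * bᴴ)
        + ((t : ℂ) * (t : ℂ)) • (Zᴴ * Z)) := by
      rw [haH, ha]
      simp only [add_mul, mul_add, mul_smul_comm, smul_mul_assoc, smul_smul, smul_add]
      abel
    have hexp : Φ (Φ (aᴴ * a) - (Φ a)ᴴ * Φ a)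
        = (t : ℂ) • Φ (b * Z + Zᴴ * bᴴ) + ((t : ℂ) * (t : ℂ)) • Φ (Zᴴ * Z) := by
      rw [map_sub, hidem, hΦa, conjTranspose_conjTranspose, hmul]
      simp only [map_add, _root_.map_smul, smul_add]
      abel
    rw [hexp] at hS
    exact hS
  have hform : ∀ x : Fin n → ℂ, dotProduct (star x) (Φ (b * Z + Zᴴ * bᴴ) *ᵥ x) = 0 := by
    intro x
    set w := dotProduct (star x) (Φ (b * Z + Zᴴ * bᴴ) *ᵥ x) with hw
    set v := dotProduct (star x) (Φ (Zᴴ * Z) *ᵥ x) with hv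
    have hvpos : 0 ≤ v := hVpsd.dotProduct_mulVec_nonneg x
    have hf : ∀ t : ℝ, 0 ≤ (t : ℂ) * w + ((t : ℂ) * (t : ℂ)) * v := by
      intro t
      have h := (ht t).dotProduct_mulVec_nonneg x
      simpa only [Matrix.add_mulVec, Matrix.smul_mulVec, dotProduct_add,
        dotProduct_smul, smul_eq_mul, ← hw, ← hv, mul_assoc] using h
    have hre : ∀ t : ℝ, 0 ≤ t * w.re + t * t * v.re := by
      intro t
      have h := (Complex.nonneg_iff.mp (hf t)).1
      simpa [Complex.add_re, Complex.mul_re, Complex.ofReal_re, Complex.ofReal_im] using h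
    have him : w.im = 0 := by
      have h1 := (Complex.nonneg_iff.mp (hf 1)).2
      have h2 := (Complex.nonneg_iff.mp (hf (-1))).2
      simp [Complex.add_im, Complex.mul_im] at h1 h2
      linarith
    have hvre : 0 ≤ v.re := (Complex.nonneg_iff.mp hvpos).1
    have hwre : w.re = 0 := by
      have hr1 : (0 : ℝ) < v.re + 1 := by linarith
      have h2 := hre (-(w.re) / (v.re + 1))
      have h5 : (v.re + 1) ^ 2 * ((-(w.re) / (v.re + 1)) * w.re
          + (-(w.re) / (v.re + 1)) * (-(w.re) / (v.re + 1)) * v.re) = -(w.re ^ 2) := by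
        field_simp
        ring
      nlinarith [mul_nonneg (sq_nonneg (v.re + 1)) h2, sq_nonneg w.re]
    exact Complex.ext hwre him
  exact eq_zero_of_forms _ hform

lemma key {n : ℕ} {Φ : Module.End ℂ (MatC n)} (hCP : IsCompletelyPositive Φ)
    (hunit : Φ 1 = 1) (hidem : ∀ X : MatC n, Φ (Φ X) = Φ X)
    (b Z : MatC n) (hb : Φ b = b) (hZ : Φ Z = 0) : Φ (b * Z) = 0 := by
  have h1 : Φ (b * Z) + Φ (Zᴴ * bᴴ) = 0 := by
    have h := wlem hCP hunit hidem b Z hb hZ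
    rwa [map_add] at h
  have hZ2 : Φ (Complex.I • Z) = 0 := by rw [_root_.map_smul, hZ, smul_zero]
  have h2 := wlem hCP hunit hidem b (Complex.I • Z) hb hZ2
  have e1 : b * (Complex.I • Z) = Complex.I • (b * Z) := mul_smul_comm _ _ _
  have e2 : (Complex.I • Z)ᴴ * bᴴ = (-Complex.I) • (Zᴴ * bᴴ) := by
    rw [conjTranspose_smul, smul_mul_assoc, Complex.star_def, Complex.conj_I]
  rw [e1, e2, map_add, _root_.map_smul, _root_.map_smul] at h2
  -- h2 : I • Φ (b*Z) + (-I) • Φ (Zᴴ*bᴴ) = 0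
  have h3 : Φ (Zᴴ * bᴴ) = -Φ (b * Z) := eq_neg_of_add_eq_zero_right h1
  rw [h3, smul_neg, neg_smul, neg_neg] at h2
  have h4 : ((2 : ℂ) * Complex.I) • Φ (b * Z) = 0 := by
    rw [two_mul, add_smul]
    exact h2
  have h5 : (2 : ℂ) * Complex.I ≠ 0 := by
    simp [Complex.ext_iff]
  exact (smul_eq_zero.mp h4).resolve_left h5

lemma key2 {n : ℕ} {Φ : Module.End ℂ (MatC n)} (hCP : IsCompletelyPositive Φ)
    (hunit : Φ 1 = 1) (hidem : ∀ X : MatC n, Φ (Φ X) = Φ X)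
    (b Z : MatC n) (hb : Φ b = b) (hZ : Φ Z = 0) : Φ (Z * b) = 0 := by
  have hbH : Φ bᴴ = bᴴ := by rw [star_pres hCP, hb]
  have hZH : Φ Zᴴ = 0 := by rw [star_pres hCP, hZ, conjTranspose_zero]
  have h := key hCP hunit hidem bᴴ Zᴴ hbH hZH
  have h2 : Φ ((Z * b)ᴴ) = 0 := by rwa [conjTranspose_mul]
  rw [star_pres hCP] at h2
  calc Φ (Z * b) = ((Φ (Z * b))ᴴ)ᴴ := (conjTranspose_conjTranspose _).symm
    _ = 0 := by rw [h2, conjTranspose_zero]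

/-- Hamana's lemma: for an idempotent UCP map Φ,
Φ(Φ(X)Φ(Y)) = Φ(Φ(X)Y) = Φ(XΦ(Y)). -/
theorem hamana_lemma {n : ℕ} (Φ : Module.End ℂ (MatC n))
    (hCP : IsCompletelyPositive Φ) (hunit : Φ 1 = 1)
    (hidem : ∀ X : MatC n, Φ (Φ X) = Φ X) (X Y : MatC n) :
    Φ (Φ X * Φ Y) = Φ (Φ X * Y) ∧ Φ (Φ X * Y) = Φ (X * Φ Y) := by
  have h1 : Φ (Φ X * Φ Y) = Φ (Φ X * Y) := by
    have hZ : Φ (Φ Y - Y) = 0 := by rw [map_sub, hidem, sub_self]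
    have h := key hCP hunit hidem (Φ X) (Φ Y - Y) (hidem X) hZ
    rw [mul_sub, map_sub, sub_eq_zero] at h
    exact h
  have h2 : Φ (Φ X * Φ Y) = Φ (X * Φ Y) := by
    have hZ : Φ (Φ X - X) = 0 := by rw [map_sub, hidem, sub_self]
    have h := key2 hCP hunit hidem (Φ Y) (Φ X - X) (hidem Y) hZ
    rw [sub_mul, map_sub, sub_eq_zero] at h
    exact h
  exact ⟨h1, h1 ▸ h2⟩
end

section
/- The decoherence-free algebra N of a unital completely positive map Φ on B(H) is invariant under Φ: Φ(N) ⊆ N. -/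
open Matrix
open scoped ComplexOrder

/-- The decoherence-free algebra of Φ. -/
def decFree {n : ℕ} (Φ : Module.End ℂ (MatC n)) : Set (MatC n) :=
  {X | ∀ (m : ℕ) (Y : MatC n), (Φ ^ m) (Y * X) = (Φ ^ m) Y * (Φ ^ m) X ∧
        (Φ ^ m) (X * Y) = (Φ ^ m) X * (Φ ^ m) Y}

section Aux

variable {n : ℕ}

/-- Polarization: a complex matrix with vanishing quadratic form is zero. -/
lemma polar (D : MatC n) (h : ∀ x : Fin n → ℂ, star x ⬝ᵥ D *ᵥ x = 0) : D = 0 := by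
  have key : ∀ x y : Fin n → ℂ, star x ⬝ᵥ D *ᵥ y = 0 := by
    intro x y
    have h1 := h (x + y)
    have h2 := h (x + Complex.I • y)
    have hx := h x
    have hy := h y
    simp only [star_add, star_smul, add_dotProduct, smul_dotProduct, mulVec_add,
      mulVec_smul, dotProduct_add, dotProduct_smul, hx, hy, smul_eq_mul,
      Complex.star_def, Complex.conj_I] at h1 h2
    set p := star x ⬝ᵥ D *ᵥ y with hp
    set q := star y ⬝ᵥ D *ᵥ x with hq
    have e2 : Complex.I * (p - q) = 0 := by linear_combination h2
    have e3 : p - q = 0 := by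
      rcases mul_eq_zero.mp e2 with h' | h'
      · exact absurd h' Complex.I_ne_zero
      · exact h'
    linear_combination (h1 + e3) / 2
  ext i j
  have := key (Pi.single i 1) (Pi.single j 1)
  simpa [dotProduct, mulVec, Pi.single_apply, Finset.sum_ite_eq', Finset.sum_ite_eq] using this

lemma cp_comp {Φ Ψ : Module.End ℂ (MatC n)} (hΦ : IsCompletelyPositive Φ)
    (hΨ : IsCompletelyPositive Ψ) : IsCompletelyPositive (Φ * Ψ) := by
  intro k M hM
  have h1 := hΦ k _ (hΨ k M hM)
  have heq : (Matrix.of fun p q : Fin n × Fin k =>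
      (Φ * Ψ) (Matrix.of fun i j => M (i, p.2) (j, q.2)) p.1 q.1) =
      (Matrix.of fun p q : Fin n × Fin k =>
      Φ (Matrix.of fun i j => (Matrix.of fun p' q' : Fin n × Fin k =>
        Ψ (Matrix.of fun i' j' => M (i', p'.2) (j', q'.2)) p'.1 q'.1) (i, p.2) (j, q.2))
        p.1 q.1) := by
    ext p q
    simp only [Matrix.of_apply, Module.End.mul_apply]
    rfl
  rw [heq]
  exact h1

lemma cp_pow {Φ : Module.End ℂ (MatC n)} (hΦ : IsCompletelyPositive Φ) (m : ℕ) :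
    IsCompletelyPositive (Φ ^ m) := by
  induction m with
  | zero =>
    intro k M hM
    have heq : (Matrix.of fun p q : Fin n × Fin k =>
        ((Φ ^ 0) (Matrix.of fun i j => M (i, p.2) (j, q.2))) p.1 q.1) = M := by
      ext p q
      simp [Module.End.one_apply]
    rw [heq]
    exact hM
  | succ m ih =>
    rw [pow_succ]
    exact cp_comp ih hΦ

lemma unital_pow {Φ : Module.End ℂ (MatC n)} (hu : Φ 1 = 1) (m : ℕ) :
    (Φ ^ m) 1 = 1 := by
  induction m with
  | zero => simp
  | succ m ih => rw [pow_succ, Module.End.mul_apply, hu, ih]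

/-- Gram matrices are mapped to positive semidefinite matrices by a CP map. -/
lemma gram_psd {Ψ : Module.End ℂ (MatC n)} (hΨ : IsCompletelyPositive Ψ)
    {k : ℕ} (c : Fin k → MatC n) :
    (Matrix.of fun p q : Fin n × Fin k =>
      Ψ ((c p.2)ᴴ * c q.2) p.1 q.1).PosSemidef := by
  set B : Matrix (Fin n) (Fin n × Fin k) ℂ :=
    Matrix.of (fun r jv => (c jv.2) r jv.1) with hB
  have hM : (Bᴴ * B).PosSemidef := posSemidef_conjTranspose_mul_self B
  have h1 := hΨ k _ hM
  have inner : ∀ u v : Fin k,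
      (Matrix.of fun i j => (Bᴴ * B) (i, u) (j, v)) = (c u)ᴴ * c v := by
    intro u v
    ext i j
    simp [hB, Matrix.mul_apply, Matrix.conjTranspose_apply]
  have heq : (Matrix.of fun p q : Fin n × Fin k =>
      Ψ (Matrix.of fun i j => (Bᴴ * B) (i, p.2) (j, q.2)) p.1 q.1) =
      (Matrix.of fun p q : Fin n × Fin k => Ψ ((c p.2)ᴴ * c q.2) p.1 q.1) := by
    ext p q
    rw [Matrix.of_apply, Matrix.of_apply, inner]
  rw [heq] at h1
  exact h1

/-- A completely positive map preserves adjoints. -/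
lemma star_pres_s7 {Ψ : Module.End ℂ (MatC n)} (hΨ : IsCompletelyPositive Ψ)
    (A : MatC n) : Ψ Aᴴ = (Ψ A)ᴴ := by
  have hN := (gram_psd hΨ ![A, 1]).isHermitian
  ext i j
  have := congrFun (congrFun hN ((i, 0) : Fin n × Fin 2)) ((j, 1) : Fin n × Fin 2)
  simp only [Matrix.conjTranspose_apply, Matrix.of_apply, Matrix.cons_val_zero,
    Matrix.cons_val_one, Matrix.head_cons, Matrix.conjTranspose_one, one_mul,
    mul_one] at this
  rw [Matrix.conjTranspose_apply]
  exact this.symm ▸ rfl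

/-- The equiv between `Fin n ⊕ Fin n` and `Fin n × Fin 2`. -/
def sum2 : (Fin n ⊕ Fin n) ≃ (Fin n × Fin 2) where
  toFun := Sum.elim (fun i => (i, 0)) (fun i => (i, 1))
  invFun p := if p.2 = 0 then Sum.inl p.1 else Sum.inr p.1
  left_inv := by rintro (i | i) <;> simp
  right_inv := by
    rintro ⟨i, u⟩
    fin_cases u <;> simp

/-- The Kadison–Schwarz inequality for unital CP maps. -/
lemma schwarz_s7 {Ψ : Module.End ℂ (MatC n)} (hΨ : IsCompletelyPositive Ψ)
    (hu : Ψ 1 = 1) (A : MatC n) :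
    (Ψ (Aᴴ * A) - (Ψ A)ᴴ * Ψ A).PosSemidef := by
  have hN := gram_psd hΨ ![A, 1]
  have hsub := (posSemidef_submatrix_equiv (sum2 (n := n))).mpr hN
  have heq : (Matrix.of fun p q : Fin n × Fin 2 =>
      Ψ ((![A, 1] p.2)ᴴ * ![A, 1] q.2) p.1 q.1).submatrix sum2 sum2 =
      fromBlocks (Ψ (Aᴴ * A)) (Ψ Aᴴ) (Ψ A) 1 := by
    ext p q
    rcases p with i | i <;> rcases q with j | j <;>
      simp [sum2, fromBlocks, Matrix.submatrix_apply, hu, star_pres_s7 hΨ]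
  rw [heq] at hsub
  have hB : Ψ A = (Ψ Aᴴ)ᴴ := by rw [star_pres_s7 hΨ, conjTranspose_conjTranspose]
  rw [hB] at hsub
  haveI : Invertible (1 : MatC n) := invertibleOne
  have := (Matrix.PosDef.fromBlocks₂₂ (Ψ (Aᴴ * A)) (Ψ Aᴴ) Matrix.PosDef.one).mp hsub
  simpa [star_pres_s7 hΨ] using this

/-- A map satisfying the Schwarz inequality is positive. -/
lemma pos_of_schwarz {Ψ : Module.End ℂ (MatC n)}
    (hs : ∀ A : MatC n, (Ψ (Aᴴ * A) - (Ψ A)ᴴ * Ψ A).PosSemidef)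
    {P : MatC n} (hP : P.PosSemidef) : (Ψ P).PosSemidef := by
  obtain ⟨S, hS⟩ : ∃ S : MatC n, P = Sᴴ * S := by
    open scoped MatrixOrder in
    obtain ⟨B, hB⟩ := CStarAlgebra.nonneg_iff_eq_star_mul_self.mp hP.nonneg
    exact ⟨B, hB⟩
  have h1 : P = Sᴴ * S := hS
  have h2 := hs S
  have h3 := posSemidef_conjTranspose_mul_self (Ψ S)
  have := h2.add h3
  simpa [← h1] using this

lemma psd_antisymm {P : MatC n} (hP : P.PosSemidef) (hP' : (-P).PosSemidef) : P = 0 := by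
  apply polar
  intro x
  have h1 := hP.dotProduct_mulVec_nonneg x
  have h2 := hP'.dotProduct_mulVec_nonneg x
  rw [neg_mulVec, dotProduct_neg] at h2
  have h2' : star x ⬝ᵥ P *ᵥ x ≤ 0 := neg_nonneg.mp h2
  exact le_antisymm h2' h1

lemma conj_form (D : MatC n) (x : Fin n → ℂ) :
    star x ⬝ᵥ Dᴴ *ᵥ x = star (star x ⬝ᵥ D *ᵥ x) := by
  simp only [dotProduct, mulVec, conjTranspose_apply, star_sum, star_mul',
    star_star, Pi.star_apply, Finset.mul_sum]
  rw [Finset.sum_comm]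
  exact Finset.sum_congr rfl fun i _ => Finset.sum_congr rfl fun j _ => by ring

lemma real_trick {r s : ℝ} (hs : 0 ≤ s)
    (h : ∀ ε : ℝ, 0 ≤ 2 * ε * r + ε ^ 2 * s) : r = 0 := by
  by_contra hr
  have hp : (0:ℝ) < s + 1 := by linarith
  have hr2 : 0 < r ^ 2 := by positivity
  set ε : ℝ := -r / (s + 1) with hε
  have expand : (2 * ε * r + ε ^ 2 * s) * (s + 1) ^ 2 = -(r ^ 2) * (s + 2) := by
    rw [hε]; field_simp; ring
  have h2 : 0 ≤ (2 * ε * r + ε ^ 2 * s) * (s + 1) ^ 2 :=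
    mul_nonneg (h ε) (by positivity)
  rw [expand] at h2
  nlinarith [hr2, hp]

/-- The multiplicative-domain property: Schwarz equality at `a` implies
`Ψ` is a left-module map at `a`. -/
lemma mult_domain {Ψ : Module.End ℂ (MatC n)}
    (hs : ∀ A : MatC n, (Ψ (Aᴴ * A) - (Ψ A)ᴴ * Ψ A).PosSemidef)
    (hst : ∀ A : MatC n, Ψ Aᴴ = (Ψ A)ᴴ)
    {a : MatC n} (ha : Ψ (aᴴ * a) = (Ψ a)ᴴ * Ψ a)
    (b : MatC n) : Ψ (aᴴ * b) = (Ψ a)ᴴ * Ψ b := by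
  have hD' : Ψ (bᴴ * a) - (Ψ b)ᴴ * Ψ a = (Ψ (aᴴ * b) - (Ψ a)ᴴ * Ψ b)ᴴ := by
    have h1 : (aᴴ * b)ᴴ = bᴴ * a := by
      rw [conjTranspose_mul, conjTranspose_conjTranspose]
    rw [conjTranspose_sub, conjTranspose_mul, conjTranspose_conjTranspose,
      ← hst (aᴴ * b), h1]
  set D := Ψ (aᴴ * b) - (Ψ a)ᴴ * Ψ b with hD
  set E := Ψ (bᴴ * b) - (Ψ b)ᴴ * Ψ b with hE
  have key : ∀ t : ℂ, (t • D + (star t) • Dᴴ + ((star t * t) • E)).PosSemidef := by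
    intro t
    have h := hs (a + t • b)
    have expand : Ψ ((a + t • b)ᴴ * (a + t • b)) - (Ψ (a + t • b))ᴴ * Ψ (a + t • b)
        = t • D + (star t) • Dᴴ + ((star t * t) • E) := by
      rw [hD, hE, ← hD']
      simp only [conjTranspose_add, conjTranspose_smul, add_mul, mul_add,
        smul_mul_assoc, mul_smul_comm, smul_smul, map_add, _root_.map_smul, ha]
      module
    rw [expand] at h
    exact h
  have hq0 : ∀ x : Fin n → ℂ, star x ⬝ᵥ D *ᵥ x = 0 := by
    intro x
    have he : (0 : ℂ) ≤ star x ⬝ᵥ E *ᵥ x := (hs b).dotProduct_mulVec_nonneg x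
    set q := star x ⬝ᵥ D *ᵥ x with hq
    set e := star x ⬝ᵥ E *ᵥ x with heq
    have hqc := conj_form D x
    have hform : ∀ t : ℂ, 0 ≤ t * q + star t * star q + (star t * t) * e := by
      intro t
      have h := (key t).dotProduct_mulVec_nonneg x
      simp only [add_mulVec, smul_mulVec, dotProduct_add, dotProduct_smul,
        smul_eq_mul, hqc, ← hq, ← heq] at h
      convert h using 1
    have he_re : 0 ≤ e.re := (Complex.le_def.mp he).1
    have hre : ∀ ε : ℝ, 0 ≤ 2 * ε * q.re + ε ^ 2 * e.re := by
      intro ε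
      have h := (Complex.le_def.mp (hform (ε : ℂ))).1
      simp only [Complex.add_re, Complex.mul_re, Complex.mul_im, Complex.ofReal_re,
        Complex.ofReal_im, Complex.zero_re, RCLike.star_def, Complex.conj_re,
        Complex.conj_im] at h
      nlinarith [h]
    have him : ∀ ε : ℝ, 0 ≤ 2 * ε * (-q.im) + ε ^ 2 * e.re := by
      intro ε
      have h := (Complex.le_def.mp (hform ((ε : ℂ) * Complex.I))).1
      simp only [Complex.add_re, Complex.mul_re, Complex.mul_im, Complex.ofReal_re,
        Complex.ofReal_im, Complex.I_re, Complex.I_im, Complex.zero_re,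
        RCLike.star_def, _root_.map_mul, Complex.conj_I, Complex.conj_re,
        Complex.conj_im, Complex.neg_re, Complex.neg_im] at h
      nlinarith [h]
    have hqre : q.re = 0 := real_trick he_re hre
    have hqim : -q.im = 0 := real_trick he_re him
    exact Complex.ext hqre (neg_eq_zero.mp hqim)
  have h0 := polar D hq0
  rw [hD] at h0
  exact sub_eq_zero.mp h0

end Aux

/-- The decoherence-free algebra is invariant under Φ. -/
theorem decFree_invariant {n : ℕ} (Φ : Module.End ℂ (MatC n))
    (hCP : IsCompletelyPositive Φ) (hunit : Φ 1 = 1)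
    (X : MatC n) (hX : X ∈ decFree Φ) : Φ X ∈ decFree Φ := by
  intro m Y
  have hCPm := cp_pow hCP m
  have hCPm1 := cp_pow hCP (m + 1)
  have hum : (Φ ^ m) 1 = 1 := unital_pow hunit m
  have hstm := star_pres_s7 hCPm
  have hsm := schwarz_s7 hCPm hum
  have hpow : ∀ Z : MatC n, (Φ ^ m) (Φ Z) = (Φ ^ (m + 1)) Z := by
    intro Z
    rw [pow_succ, Module.End.mul_apply]
  -- Schwarz equality for a = Φ X against Φ ^ m, column version
  have step1 : (Φ ^ m) ((Φ X)ᴴ * Φ X) = ((Φ ^ m) (Φ X))ᴴ * (Φ ^ m) (Φ X) := by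
    have hG := hsm (Φ X)
    have hupper : ((Φ ^ m) (Φ (Xᴴ * X) - (Φ X)ᴴ * Φ X)).PosSemidef :=
      pos_of_schwarz hsm (schwarz_s7 hCP hunit X)
    have hmul : (Φ ^ (m + 1)) (Xᴴ * X)
        = ((Φ ^ (m + 1)) X)ᴴ * ((Φ ^ (m + 1)) X) := by
      rw [(hX (m + 1) Xᴴ).1, star_pres_s7 hCPm1 X]
    have hneg : (-( (Φ ^ m) ((Φ X)ᴴ * Φ X) - ((Φ ^ m) (Φ X))ᴴ * (Φ ^ m) (Φ X))).PosSemidef := by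
      have hlin : (Φ ^ m) (Φ (Xᴴ * X) - (Φ X)ᴴ * Φ X)
          = -( (Φ ^ m) ((Φ X)ᴴ * Φ X) - ((Φ ^ m) (Φ X))ᴴ * (Φ ^ m) (Φ X)) := by
        rw [map_sub, hpow (Xᴴ * X), hmul, hpow X]
        abel
      rw [← hlin]
      exact hupper
    have := psd_antisymm hG hneg
    exact sub_eq_zero.mp this
  -- Schwarz equality for a = Φ X against Φ ^ m, row version
  have step2 : (Φ ^ m) (Φ X * (Φ X)ᴴ) = (Φ ^ m) (Φ X) * ((Φ ^ m) (Φ X))ᴴ := by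
    have hG := hsm ((Φ X)ᴴ)
    simp only [conjTranspose_conjTranspose, hstm] at hG
    have hup0 : (Φ (X * Xᴴ) - Φ X * (Φ X)ᴴ).PosSemidef := by
      have := schwarz_s7 hCP hunit Xᴴ
      simp only [conjTranspose_conjTranspose, star_pres_s7 hCP] at this
      exact this
    have hupper : ((Φ ^ m) (Φ (X * Xᴴ) - Φ X * (Φ X)ᴴ)).PosSemidef :=
      pos_of_schwarz hsm hup0
    have hmul : (Φ ^ (m + 1)) (X * Xᴴ)
        = ((Φ ^ (m + 1)) X) * ((Φ ^ (m + 1)) X)ᴴ := by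
      rw [(hX (m + 1) Xᴴ).2, star_pres_s7 hCPm1 X]
    have hneg : (-( (Φ ^ m) (Φ X * (Φ X)ᴴ) - (Φ ^ m) (Φ X) * ((Φ ^ m) (Φ X))ᴴ)).PosSemidef := by
      have hlin : (Φ ^ m) (Φ (X * Xᴴ) - Φ X * (Φ X)ᴴ)
          = -( (Φ ^ m) (Φ X * (Φ X)ᴴ) - (Φ ^ m) (Φ X) * ((Φ ^ m) (Φ X))ᴴ) := by
        rw [map_sub, hpow (X * Xᴴ), hmul, hpow X]
        abel
      rw [← hlin]
      exact hupper
    have := psd_antisymm hG hneg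
    exact sub_eq_zero.mp this
  constructor
  · -- left multiplication
    have h := mult_domain hsm hstm step1 Yᴴ
    have h1 : ((Φ X)ᴴ * Yᴴ)ᴴ = Y * Φ X := by
      rw [conjTranspose_mul, conjTranspose_conjTranspose, conjTranspose_conjTranspose]
    calc (Φ ^ m) (Y * Φ X) = (Φ ^ m) (((Φ X)ᴴ * Yᴴ)ᴴ) := by rw [h1]
      _ = ((Φ ^ m) ((Φ X)ᴴ * Yᴴ))ᴴ := hstm _
      _ = (((Φ ^ m) (Φ X))ᴴ * (Φ ^ m) Yᴴ)ᴴ := by rw [h]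
      _ = ((Φ ^ m) Yᴴ)ᴴ * (Φ ^ m) (Φ X) := by
          rw [conjTranspose_mul, conjTranspose_conjTranspose]
      _ = (Φ ^ m) Y * (Φ ^ m) (Φ X) := by
          rw [hstm Y, conjTranspose_conjTranspose]
  · -- right multiplication
    have ha2 : (Φ ^ m) (((Φ X)ᴴ)ᴴ * (Φ X)ᴴ) = ((Φ ^ m) ((Φ X)ᴴ))ᴴ * (Φ ^ m) ((Φ X)ᴴ) := by
      simp only [conjTranspose_conjTranspose, hstm, step2]
    have h := mult_domain hsm hstm ha2 Y
    simp only [conjTranspose_conjTranspose, hstm] at h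
    exact h
end

section
/- If Φ is a faithful unital completely positive map on B(H) (there exists a positive definite ρ with Φ†(ρ) = ρ), then its attractor subspace equals its decoherence-free algebra: Attr(Φ) = N. -/
open Matrix
open scoped ComplexOrder

/-- The attractor subspace: span of peripheral (unimodular) eigenvectors. -/
noncomputable def attr {n : ℕ} (Φ : Module.End ℂ (MatC n)) : Submodule ℂ (MatC n) :=
  Submodule.span ℂ {X | ∃ c : ℂ, ‖c‖ = 1 ∧ Φ X = c • X}

/-- Faithfulness: existence of a full-rank stationary state for the
Hilbert-Schmidt adjoint of Φ. -/
def IsFaithful {n : ℕ} (Φ : Module.End ℂ (MatC n)) : Prop :=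
  ∃ ρ : MatC n, ρ.PosDef ∧ ρ.trace = 1 ∧ ∀ A : MatC n, (Φ A * ρ).trace = (A * ρ).trace

open scoped MatrixOrder in
lemma psd_exists_conjTranspose_mul_self {m : Type*} [Fintype m] [DecidableEq m] {M : Matrix m m ℂ}
    (hM : M.PosSemidef) : ∃ B : Matrix m m ℂ, M = Bᴴ * B := by
  refine ⟨CFC.sqrt M, ?_⟩
  rw [(CFC.sqrt_nonneg M).posSemidef.1.eq, CFC.sqrt_mul_sqrt_self M hM.nonneg]

-- Part 0 : PSD trace lemmas
lemma psd_trace_nonneg {m : Type*} [Fintype m] [DecidableEq m] {M : Matrix m m ℂ}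
    (hM : M.PosSemidef) : 0 ≤ M.trace := by
  obtain ⟨B, rfl⟩ := psd_exists_conjTranspose_mul_self hM
  have : (Bᴴ * B).trace = ∑ j, ∑ i, star (B i j) * B i j := by
    simp [Matrix.trace, Matrix.mul_apply, Matrix.diag, Matrix.conjTranspose_apply]
  rw [this]
  exact Finset.sum_nonneg fun j _ => Finset.sum_nonneg fun i _ => star_mul_self_nonneg _

lemma psd_trace_eq_zero {m : Type*} [Fintype m] [DecidableEq m] {M : Matrix m m ℂ}
    (hM : M.PosSemidef) (h : M.trace = 0) : M = 0 := by
  obtain ⟨B, rfl⟩ := psd_exists_conjTranspose_mul_self hM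
  have hB : B = 0 := by
    have htr : ∑ j, ∑ i, star (B i j) * B i j = 0 := by
      rw [← h]; simp [Matrix.trace, Matrix.mul_apply, Matrix.diag, Matrix.conjTranspose_apply]
    have h1 := (Finset.sum_eq_zero_iff_of_nonneg (fun j _ =>
      Finset.sum_nonneg fun i _ => star_mul_self_nonneg (B i j))).mp htr
    ext i j
    have h2 := (Finset.sum_eq_zero_iff_of_nonneg (fun i _ =>
      star_mul_self_nonneg (B i j))).mp (h1 j (Finset.mem_univ _)) i (Finset.mem_univ _)
    rcases mul_eq_zero.mp h2 with h3 | h3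
    · simpa using star_eq_zero.mp h3
    · simpa using h3
  simp [hB]

/-- elementary matrix -/
def Ebas {n : ℕ} (x y : Fin n) : MatC n :=
  Matrix.of fun i j => (if i = x then (1 : ℂ) else 0) * (if j = y then 1 else 0)

lemma Ebas_decomp {n : ℕ} (A : MatC n) : A = ∑ x, ∑ y, A x y • Ebas x y := by
  ext i j
  simp [Ebas, Matrix.sum_apply, mul_ite, ite_mul, Finset.sum_ite_eq']

-- Part A : Kraus decomposition
lemma exists_kraus {n : ℕ} (Φ : Module.End ℂ (MatC n)) (hCP : IsCompletelyPositive Φ) :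
    ∃ K : (Fin n × Fin n) → MatC n, ∀ A, Φ A = ∑ r, (K r)ᴴ * A * K r := by
  classical
  set A0 : Matrix (Fin 1) (Fin n × Fin n) ℂ :=
    Matrix.of (fun _ p => if p.1 = p.2 then 1 else 0) with hA0
  have hM : (A0ᴴ * A0).PosSemidef := Matrix.posSemidef_conjTranspose_mul_self A0
  have hC := hCP n _ hM
  obtain ⟨B, hB⟩ := psd_exists_conjTranspose_mul_self hC
  refine ⟨fun r => Matrix.of (fun a b => B r (b, a)), fun A => ?_⟩
  have hMentry : ∀ (i j p q : Fin n),
      (A0ᴴ * A0) (i, p) (j, q) = (if i = p then 1 else 0) * (if j = q then 1 else 0) := by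
    intro i j p q
    simp [Matrix.mul_apply, Matrix.conjTranspose_apply, hA0, apply_ite star]
  have hCentry : ∀ (p q : Fin n × Fin n),
      Φ (Ebas p.2 q.2) p.1 q.1 = ∑ r, star (B r p) * B r q := by
    intro p q
    have h1 : (Matrix.of fun i j => (A0ᴴ * A0) (i, p.2) (j, q.2)) = Ebas p.2 q.2 := by
      ext i j
      rw [Matrix.of_apply, hMentry]
      rfl
    have h2 := congrArg (fun X => X p q) hB
    simp only [Matrix.of_apply] at h2
    rw [h1] at h2
    rw [h2]
    simp [Matrix.mul_apply, Matrix.conjTranspose_apply]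
  have key : ∀ x y : Fin n, Φ (Ebas x y) =
      ∑ r, (Matrix.of (fun a b => B r (b, a)))ᴴ * Ebas x y * Matrix.of (fun a b => B r (b, a)) := by
    intro x y
    ext p₁ q₁
    rw [hCentry (p₁, x) (q₁, y), Matrix.sum_apply]
    refine Finset.sum_congr rfl fun r _ => ?_
    simp [Matrix.mul_apply, Matrix.conjTranspose_apply, Ebas, mul_ite, ite_mul,
      Finset.sum_ite_eq', mul_comm]
  calc Φ A = Φ (∑ x, ∑ y, A x y • Ebas x y) := by rw [← Ebas_decomp]
    _ = ∑ x, ∑ y, A x y • Φ (Ebas x y) := by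
      rw [map_sum]
      exact Finset.sum_congr rfl fun x _ => by
        rw [map_sum]
        exact Finset.sum_congr rfl fun y _ => by rw [_root_.map_smul]
    _ = ∑ x, ∑ y, ∑ r, A x y •
        ((Matrix.of (fun a b => B r (b, a)))ᴴ * Ebas x y * Matrix.of (fun a b => B r (b, a))) := by
      simp_rw [key, Finset.smul_sum]
    _ = ∑ x, ∑ r, ∑ y, A x y •
        ((Matrix.of (fun a b => B r (b, a)))ᴴ * Ebas x y * Matrix.of (fun a b => B r (b, a))) :=
      Finset.sum_congr rfl fun x _ => Finset.sum_comm
    _ = ∑ r, ∑ x, ∑ y, A x y •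
        ((Matrix.of (fun a b => B r (b, a)))ᴴ * Ebas x y * Matrix.of (fun a b => B r (b, a))) :=
      Finset.sum_comm
    _ = ∑ r, (Matrix.of (fun a b => B r (b, a)))ᴴ * A * Matrix.of (fun a b => B r (b, a)) := by
      refine Finset.sum_congr rfl fun r _ => ?_
      conv_rhs => rw [Ebas_decomp A]
      simp [Finset.mul_sum, Finset.sum_mul, Matrix.smul_mul, Matrix.mul_smul]

-- Part B : consequences of a Kraus decomposition
section Kraus

variable {n : ℕ} {Φ : Module.End ℂ (MatC n)} {K : (Fin n × Fin n) → MatC n}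

lemma kraus_star (hK : ∀ A, Φ A = ∑ r, (K r)ᴴ * A * K r) (A : MatC n) :
    Φ Aᴴ = (Φ A)ᴴ := by
  rw [hK, hK, Matrix.conjTranspose_sum]
  refine Finset.sum_congr rfl fun r _ => ?_
  simp [Matrix.conjTranspose_mul, Matrix.mul_assoc]

lemma kraus_sum_one (hK : ∀ A, Φ A = ∑ r, (K r)ᴴ * A * K r) (hunit : Φ 1 = 1) :
    ∑ r, (K r)ᴴ * K r = 1 := by
  have := hK 1
  rw [hunit] at this
  simpa using this.symm

lemma kraus_defect (hK : ∀ A, Φ A = ∑ r, (K r)ᴴ * A * K r) (hunit : Φ 1 = 1) (A : MatC n) :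
    ∑ r, (A * K r - K r * Φ A)ᴴ * (A * K r - K r * Φ A) = Φ (Aᴴ * A) - (Φ A)ᴴ * Φ A := by
  have expand : ∀ r, (A * K r - K r * Φ A)ᴴ * (A * K r - K r * Φ A) =
      (K r)ᴴ * (Aᴴ * A) * K r - ((K r)ᴴ * Aᴴ * K r) * Φ A
        - (Φ A)ᴴ * ((K r)ᴴ * A * K r) + (Φ A)ᴴ * ((K r)ᴴ * K r) * Φ A := by
    intro r
    simp only [Matrix.conjTranspose_sub, Matrix.conjTranspose_mul]
    noncomm_ring
  rw [Finset.sum_congr rfl fun r _ => expand r]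
  rw [Finset.sum_add_distrib, Finset.sum_sub_distrib, Finset.sum_sub_distrib]
  rw [← Finset.sum_mul, ← Finset.mul_sum, ← Finset.sum_mul]
  have h1 : ∑ r, (K r)ᴴ * Aᴴ * K r = Φ Aᴴ := (hK Aᴴ).symm
  have h2 : ∑ r, (K r)ᴴ * A * K r = Φ A := (hK A).symm
  have h3 : (∑ r, (Φ A)ᴴ * ((K r)ᴴ * K r)) * Φ A = (Φ A)ᴴ * Φ A := by
    rw [← Finset.mul_sum, kraus_sum_one hK hunit, Matrix.mul_one]
  rw [h3, ← hK (Aᴴ * A), h1, h2, kraus_star hK]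
  abel

lemma psd_sum {ι : Type*} (s : Finset ι) (f : ι → MatC n) :
    (∑ r ∈ s, (f r)ᴴ * f r).PosSemidef := by
  classical
  induction s using Finset.induction with
  | empty => simpa using Matrix.PosSemidef.zero
  | insert a s h ih =>
    rw [Finset.sum_insert h]
    exact (Matrix.posSemidef_conjTranspose_mul_self _).add ih

lemma kraus_schwarz (hK : ∀ A, Φ A = ∑ r, (K r)ᴴ * A * K r) (hunit : Φ 1 = 1) (A : MatC n) :
    (Φ (Aᴴ * A) - (Φ A)ᴴ * Φ A).PosSemidef := by
  rw [← kraus_defect hK hunit]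
  exact psd_sum _ _

end Kraus

-- Part C : consequences of faithfulness
section Faithful

variable {n : ℕ} {ρ : MatC n} (hρ : ρ.PosDef)

lemma trace_psd_rho_nonneg (hρ : ρ.PosDef) {M : MatC n} (hM : M.PosSemidef) :
    0 ≤ (M * ρ).trace := by
  open scoped MatrixOrder in
  set s := CFC.sqrt ρ with hs
  open scoped MatrixOrder in
  have hherm : s.IsHermitian := (CFC.sqrt_nonneg ρ).posSemidef.1
  open scoped MatrixOrder in
  have hss : s * s = ρ := CFC.sqrt_mul_sqrt_self ρ hρ.posSemidef.nonneg
  have h1 : (M * ρ).trace = (s * M * s).trace := by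
    rw [← hss, ← Matrix.mul_assoc, Matrix.trace_mul_comm, Matrix.mul_assoc]
  rw [h1]
  have : (s * M * s).PosSemidef := by
    have := hM.conjTranspose_mul_mul_same s
    rwa [hherm.eq] at this
  exact psd_trace_nonneg this

lemma trace_psd_rho_zero (hρ : ρ.PosDef) {M : MatC n} (hM : M.PosSemidef)
    (h : (M * ρ).trace = 0) : M = 0 := by
  open scoped MatrixOrder in
  set s := CFC.sqrt ρ with hs
  open scoped MatrixOrder in
  have hherm : s.IsHermitian := (CFC.sqrt_nonneg ρ).posSemidef.1
  open scoped MatrixOrder in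
  have hss : s * s = ρ := CFC.sqrt_mul_sqrt_self ρ hρ.posSemidef.nonneg
  have hsu : IsUnit s := by
    have hdet : ρ.det = s.det * s.det := by rw [← hss, Matrix.det_mul]
    have : ρ.det ≠ 0 := ne_of_gt hρ.det_pos
    rw [hdet] at this
    exact (Matrix.isUnit_iff_isUnit_det s).mpr (isUnit_iff_ne_zero.mpr (left_ne_zero_of_mul this))
  have h1 : (s * M * s).trace = 0 := by
    rw [← h, ← hss, Matrix.mul_assoc s M s, Matrix.trace_mul_comm, Matrix.mul_assoc]
  have hpsd : (s * M * s).PosSemidef := by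
    have := hM.conjTranspose_mul_mul_same s
    rwa [hherm.eq] at this
  have h2 : s * M * s = 0 := psd_trace_eq_zero hpsd h1
  obtain ⟨u, hu⟩ := hsu
  rw [← hu] at h2
  calc M = ↑u⁻¹ * (↑u * M * ↑u) * ↑u⁻¹ := by
        have hiu : (↑u⁻¹ : MatC n) * (↑u : MatC n) = 1 := u.inv_mul
        have h4 : (↑u : MatC n) * (↑u⁻¹ : MatC n) = 1 := u.mul_inv
        calc M = 1 * M * 1 := by rw [Matrix.one_mul, Matrix.mul_one]
          _ = ((↑u⁻¹ : MatC n) * ↑u) * M * ((↑u : MatC n) * ↑u⁻¹) := by rw [hiu, h4]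
          _ = (↑u⁻¹ : MatC n) * ((↑u : MatC n) * M * ↑u) * ↑u⁻¹ := by
              simp only [Matrix.mul_assoc]
    _ = 0 := by rw [h2, Matrix.mul_zero, Matrix.zero_mul]

lemma faithful_iterate {Φ : Module.End ℂ (MatC n)}
    (htr : ∀ A : MatC n, (Φ A * ρ).trace = (A * ρ).trace) (m : ℕ) (A : MatC n) :
    ((Φ ^ m) A * ρ).trace = (A * ρ).trace := by
  induction m generalizing A with
  | zero => simp
  | succ m ih =>
    rw [pow_succ, Module.End.mul_apply, ih (Φ A), htr]

end Faithful

-- Part D : eigenvectors with unimodular eigenvalue lie in the multiplicative domain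
section Eigen

variable {n : ℕ} {Φ : Module.End ℂ (MatC n)} {K : (Fin n × Fin n) → MatC n} {ρ : MatC n}

lemma eigen_mul_right (hK : ∀ A, Φ A = ∑ r, (K r)ᴴ * A * K r) (hunit : Φ 1 = 1)
    (hρ : ρ.PosDef) (htr : ∀ A : MatC n, (Φ A * ρ).trace = (A * ρ).trace)
    {X : MatC n} {c : ℂ} (habs : ‖c‖ = 1) (heig : Φ X = c • X) (Y : MatC n) :
    Φ (Y * X) = Φ Y * Φ X := by
  have hXX : (Φ X)ᴴ * Φ X = Xᴴ * X := by
    rw [heig, Matrix.conjTranspose_smul, Matrix.smul_mul, Matrix.mul_smul, smul_smul]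
    have hc : star c * c = 1 := by
      rw [Complex.star_def, mul_comm, Complex.mul_conj]
      norm_cast
      rw [Complex.normSq_eq_norm_sq, habs]; norm_num
    rw [hc, one_smul]
  have hdef := kraus_defect hK hunit X
  have hps := kraus_schwarz hK hunit X
  have htr0 : ((Φ (Xᴴ * X) - (Φ X)ᴴ * Φ X) * ρ).trace = 0 := by
    rw [Matrix.sub_mul, Matrix.trace_sub, htr (Xᴴ * X), hXX, sub_self]
  have hzero : Φ (Xᴴ * X) - (Φ X)ᴴ * Φ X = 0 := trace_psd_rho_zero hρ hps htr0
  have hsum0 : ∑ r, (X * K r - K r * Φ X)ᴴ * (X * K r - K r * Φ X) = 0 := by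
    rw [hdef, hzero]
  have hD : ∀ r, X * K r = K r * Φ X := by
    have htrsum : ∑ r, ((X * K r - K r * Φ X)ᴴ * (X * K r - K r * Φ X)).trace = 0 := by
      rw [← Matrix.trace_sum, hsum0, Matrix.trace_zero]
    have hterm := (Finset.sum_eq_zero_iff_of_nonneg (fun r _ =>
      psd_trace_nonneg (Matrix.posSemidef_conjTranspose_mul_self _))).mp htrsum
    intro r
    have h0 := psd_trace_eq_zero (Matrix.posSemidef_conjTranspose_mul_self _)
      (hterm r (Finset.mem_univ r))
    have := Matrix.conjTranspose_mul_self_eq_zero.mp h0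
    exact sub_eq_zero.mp this
  rw [hK (Y * X), hK Y, Finset.sum_mul]
  refine Finset.sum_congr rfl fun r _ => ?_
  calc (K r)ᴴ * (Y * X) * K r = (K r)ᴴ * Y * (X * K r) := by simp [Matrix.mul_assoc]
    _ = (K r)ᴴ * Y * (K r * Φ X) := by rw [hD r]
    _ = (K r)ᴴ * Y * K r * Φ X := by simp [Matrix.mul_assoc]

lemma eigen_mul_left (hK : ∀ A, Φ A = ∑ r, (K r)ᴴ * A * K r) (hunit : Φ 1 = 1)
    (hρ : ρ.PosDef) (htr : ∀ A : MatC n, (Φ A * ρ).trace = (A * ρ).trace)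
    {X : MatC n} {c : ℂ} (habs : ‖c‖ = 1) (heig : Φ X = c • X) (Y : MatC n) :
    Φ (X * Y) = Φ X * Φ Y := by
  have heig' : Φ Xᴴ = ((starRingEnd ℂ) c) • Xᴴ := by
    rw [kraus_star hK, heig, Matrix.conjTranspose_smul]
    rw [Complex.star_def]
  have habs' : ‖(starRingEnd ℂ) c‖ = 1 := by
    rw [Complex.norm_conj]; exact habs
  have h := eigen_mul_right hK hunit hρ htr habs' heig' Yᴴ
  calc Φ (X * Y) = (Φ ((X * Y)ᴴ))ᴴ := by
        rw [kraus_star hK, Matrix.conjTranspose_conjTranspose]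
    _ = (Φ (Yᴴ * Xᴴ))ᴴ := by rw [Matrix.conjTranspose_mul]
    _ = (Φ Yᴴ * Φ Xᴴ)ᴴ := by rw [h]
    _ = (Φ Xᴴ)ᴴ * (Φ Yᴴ)ᴴ := by rw [Matrix.conjTranspose_mul]
    _ = Φ X * Φ Y := by
        rw [kraus_star hK, kraus_star hK, Matrix.conjTranspose_conjTranspose,
          Matrix.conjTranspose_conjTranspose]

lemma eigen_mem_decFree (hK : ∀ A, Φ A = ∑ r, (K r)ᴴ * A * K r) (hunit : Φ 1 = 1)
    (hρ : ρ.PosDef) (htr : ∀ A : MatC n, (Φ A * ρ).trace = (A * ρ).trace)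
    {X : MatC n} {c : ℂ} (habs : ‖c‖ = 1) (heig : Φ X = c • X) :
    X ∈ decFree Φ := by
  intro m Y
  induction m generalizing Y with
  | zero => simp
  | succ m ih =>
    have hp : ∀ Z : MatC n, (Φ ^ (m + 1)) Z = (Φ ^ m) (Φ Z) := fun Z => by
      rw [pow_succ, Module.End.mul_apply]
    constructor
    · calc (Φ ^ (m + 1)) (Y * X) = (Φ ^ m) (Φ (Y * X)) := hp _
        _ = (Φ ^ m) (Φ Y * Φ X) := by rw [eigen_mul_right hK hunit hρ htr habs heig Y]
        _ = (Φ ^ m) (Φ Y * (c • X)) := by rw [heig]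
        _ = c • (Φ ^ m) (Φ Y * X) := by rw [Matrix.mul_smul, _root_.map_smul]
        _ = c • ((Φ ^ m) (Φ Y) * (Φ ^ m) X) := by rw [(ih (Φ Y)).1]
        _ = (Φ ^ m) (Φ Y) * (c • (Φ ^ m) X) := by rw [Matrix.mul_smul]
        _ = (Φ ^ m) (Φ Y) * ((Φ ^ m) (Φ X)) := by rw [heig, _root_.map_smul]
        _ = (Φ ^ (m + 1)) Y * (Φ ^ (m + 1)) X := by rw [hp, hp]
    · calc (Φ ^ (m + 1)) (X * Y) = (Φ ^ m) (Φ (X * Y)) := hp _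
        _ = (Φ ^ m) (Φ X * Φ Y) := by rw [eigen_mul_left hK hunit hρ htr habs heig Y]
        _ = (Φ ^ m) ((c • X) * Φ Y) := by rw [heig]
        _ = c • (Φ ^ m) (X * Φ Y) := by rw [Matrix.smul_mul, _root_.map_smul]
        _ = c • ((Φ ^ m) X * (Φ ^ m) (Φ Y)) := by rw [(ih (Φ Y)).2]
        _ = (c • (Φ ^ m) X) * (Φ ^ m) (Φ Y) := by rw [Matrix.smul_mul]
        _ = (Φ ^ m) (Φ X) * (Φ ^ m) (Φ Y) := by rw [heig, _root_.map_smul]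
        _ = (Φ ^ (m + 1)) X * (Φ ^ (m + 1)) Y := by rw [hp, hp]

end Eigen

/-- decFree is a submodule (the defining conditions are linear in `X`). -/
noncomputable def decFreeSub {n : ℕ} (Φ : Module.End ℂ (MatC n)) : Submodule ℂ (MatC n) where
  carrier := decFree Φ
  zero_mem' := by intro m Y; simp
  add_mem' := by
    intro a b ha hb m Y
    refine ⟨?_, ?_⟩
    · rw [Matrix.mul_add, map_add, (ha m Y).1, (hb m Y).1, map_add, Matrix.mul_add]
    · rw [Matrix.add_mul, map_add, (ha m Y).2, (hb m Y).2, map_add, Matrix.add_mul]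
  smul_mem' := by
    intro c X hX m Y
    refine ⟨?_, ?_⟩
    · rw [Matrix.mul_smul, _root_.map_smul, (hX m Y).1, _root_.map_smul, Matrix.mul_smul]
    · rw [Matrix.smul_mul, _root_.map_smul, (hX m Y).2, _root_.map_smul, Matrix.smul_mul]

-- Part F : abstract lemma about contractions on finite-dimensional Hilbert spaces
section Contraction

variable {E : Type*} [NormedAddCommGroup E] [InnerProductSpace ℂ E] [FiniteDimensional ℂ E]

local notation "⟪" x ", " y "⟫" => @inner ℂ _ _ x y

lemma pow_contraction (T : E →ₗ[ℂ] E) (hT : ∀ v, ‖T v‖ ≤ ‖v‖) (m : ℕ) (v : E) :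
    ‖(T ^ m) v‖ ≤ ‖v‖ := by
  induction m generalizing v with
  | zero => simp
  | succ m ih =>
    rw [pow_succ, Module.End.mul_apply]
    exact (ih (T v)).trans (hT v)

lemma adjoint_contraction (T : E →ₗ[ℂ] E) (hT : ∀ v, ‖T v‖ ≤ ‖v‖) (v : E) :
    ‖LinearMap.adjoint T v‖ ≤ ‖v‖ := by
  by_cases h0 : ‖LinearMap.adjoint T v‖ = 0
  · rw [h0]; exact norm_nonneg v
  set w := LinearMap.adjoint T v with hw
  have h1 : ⟪w, w⟫ = ⟪v, T w⟫ := by rw [hw, LinearMap.adjoint_inner_left]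
  have h2 : ‖⟪w, w⟫‖ ≤ ‖v‖ * ‖w‖ := by
    rw [h1]
    exact (norm_inner_le_norm v (T w)).trans
      (mul_le_mul_of_nonneg_left (hT w) (norm_nonneg v))
  have h3 : ‖⟪w, w⟫‖ = ‖w‖ ^ 2 := by
    rw [inner_self_eq_norm_sq_to_K]
    simp [norm_pow]
  rw [h3] at h2
  have hpos : 0 < ‖w‖ := lt_of_le_of_ne (norm_nonneg w) (Ne.symm h0)
  nlinarith

lemma isometry_inner_eq (T : E →ₗ[ℂ] E) (hT : ∀ v, ‖T v‖ ≤ ‖v‖) {u : E}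
    (hu : ‖T u‖ = ‖u‖) (w : E) : ⟪T u, T w⟫ = ⟪u, w⟫ := by
  have hadj : LinearMap.adjoint T (T u) = u := by
    have h1 : ‖LinearMap.adjoint T (T u)‖ ≤ ‖u‖ :=
      (adjoint_contraction T hT (T u)).trans (le_of_eq hu)
    have h2 : ⟪LinearMap.adjoint T (T u), u⟫ = ⟪T u, T u⟫ := by
      rw [LinearMap.adjoint_inner_left]
    have h3 : RCLike.re ⟪LinearMap.adjoint T (T u), u⟫ = ‖u‖ ^ 2 := by
      rw [h2, inner_self_eq_norm_sq_to_K, hu]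
      norm_cast
    have h4 := @norm_sub_sq ℂ _ _ _ _ (LinearMap.adjoint T (T u)) u
    have h5 : ‖LinearMap.adjoint T (T u) - u‖ ^ 2 ≤ 0 := by
      rw [h4, h3]
      nlinarith [norm_nonneg (LinearMap.adjoint T (T u)), norm_nonneg u]
    have h6 : ‖LinearMap.adjoint T (T u) - u‖ = 0 := by
      nlinarith [norm_nonneg (LinearMap.adjoint T (T u) - u)]
    exact sub_eq_zero.mp (norm_eq_zero.mp h6)
  calc ⟪T u, T w⟫ = ⟪LinearMap.adjoint T (T u), w⟫ :=
        (LinearMap.adjoint_inner_left T w (T u)).symm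
    _ = ⟪u, w⟫ := by rw [hadj]

lemma mem_span_unimodular_of_norm_preserved (T : E →ₗ[ℂ] E) (hT : ∀ v, ‖T v‖ ≤ ‖v‖)
    (x : E) (hx : ∀ m : ℕ, ‖(T ^ m) x‖ = ‖x‖) :
    x ∈ Submodule.span ℂ {v : E | ∃ c : ℂ, ‖c‖ = 1 ∧ T v = c • v} := by
  classical
  set S := {v : E | ∃ c : ℂ, ‖c‖ = 1 ∧ T v = c • v} with hS
  set W : Submodule ℂ E :=
    { carrier := {v | ∀ m : ℕ, ‖(T ^ m) v‖ = ‖v‖}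
      zero_mem' := by intro m; simp
      add_mem' := by
        intro u v hu hv m
        have hTm := pow_contraction T hT m
        have hinner := isometry_inner_eq (T ^ m) hTm (hu m) v
        have e1 : ‖(T ^ m) u + (T ^ m) v‖ ^ 2 = ‖u + v‖ ^ 2 := by
          rw [@norm_add_sq ℂ _ _ _ _, @norm_add_sq ℂ _ _ _ _, hu m, hv m, hinner]
        have e2 := congrArg Real.sqrt e1
        rw [Real.sqrt_sq (norm_nonneg _), Real.sqrt_sq (norm_nonneg _)] at e2
        show ‖(T ^ m) (u + v)‖ = ‖u + v‖
        rw [map_add]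
        exact e2
      smul_mem' := by
        intro c v hv m
        show ‖(T ^ m) (c • v)‖ = ‖c • v‖
        rw [_root_.map_smul, norm_smul, norm_smul, hv m] } with hWdef
  have hxW : x ∈ W := hx
  have hTW : ∀ v ∈ W, T v ∈ W := by
    intro v hv m
    have h1 : (T ^ m) (T v) = (T ^ (m + 1)) v := by rw [pow_succ, Module.End.mul_apply]
    have h2 : ‖T v‖ = ‖v‖ := by simpa using hv 1
    show ‖(T ^ m) (T v)‖ = ‖T v‖
    rw [h1, h2]
    exact hv (m + 1)
  set T' : Module.End ℂ ↥W := T.restrict hTW with hT'def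
  have hcoe : ∀ u : ↥W, ((T' u : E)) = T (u : E) := fun u => rfl
  -- unimodularity of eigenvalues of T'
  have heiguni : ∀ (μ : ℂ) (u : ↥W), u ≠ 0 → T' u = μ • u → ‖μ‖ = 1 := by
    intro μ u hu0 hTu
    have h1 : ‖T (u : E)‖ = ‖(u : E)‖ := by simpa using u.2 1
    have h2 : T (u : E) = μ • (u : E) := by
      rw [← hcoe, hTu]; rfl
    rw [h2, norm_smul] at h1
    have hne : ‖(u : E)‖ ≠ 0 := by
      simp only [norm_ne_zero_iff]
      exact fun h => hu0 (Subtype.ext h)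
    have h3 : ‖μ‖ * ‖(u : E)‖ = 1 * ‖(u : E)‖ := by rw [one_mul]; exact h1
    have h4 : ‖μ‖ = 1 := mul_right_cancel₀ hne h3
    simpa using h4
  -- generalized eigenvectors of T' are genuine eigenvectors
  have heigW : ∀ (μ : ℂ) (k : ℕ) (u : ↥W), ((T' - μ • 1) ^ k) u = 0 → T' u = μ • u := by
    intro μ k
    induction k with
    | zero =>
      intro u h
      simp only [pow_zero, Module.End.one_apply] at h
      rw [h]; simp
    | succ k ih =>
      intro u h
      have h' : ((T' - μ • 1) ^ k) ((T' - μ • 1) u) = 0 := by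
        rw [← Module.End.mul_apply, ← pow_succ]
        exact h
      have hvEig := ih _ h'
      set v : ↥W := (T' - μ • 1) u with hvdef
      by_cases hv0 : v = 0
      · have : T' u - μ • u = 0 := by
          have : v = T' u - μ • u := by
            rw [hvdef]
            simp [LinearMap.sub_apply, LinearMap.smul_apply]
          rw [← this]; exact hv0
        rw [sub_eq_zero] at this
        exact this
      · exfalso
        have habs : ‖μ‖ = 1 := heiguni μ v hv0 hvEig
        have hμv : T (v : E) = μ • (v : E) := by
          rw [← hcoe, hvEig]; rfl
        have hTu : T (u : E) = μ • (u : E) + (v : E) := by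
          have h1 : T' u = μ • u + v := by
            rw [hvdef]
            simp only [LinearMap.sub_apply, LinearMap.smul_apply, Module.End.one_apply]
            abel
          calc T (u : E) = ((T' u : E)) := (hcoe u).symm
            _ = ((μ • u + v : ↥W) : E) := by rw [h1]
            _ = μ • (u : E) + (v : E) := by push_cast; rfl
        have hgrow : ∀ m : ℕ, (T ^ (m + 1)) (u : E) =
            (μ ^ (m + 1)) • (u : E) + (((m : ℂ) + 1) * μ ^ m) • (v : E) := by
          intro m
          induction m with
          | zero => simpa [pow_one] using hTu
          | succ m ihm =>
            have hstep : (T ^ (m + 2)) (u : E) = T ((T ^ (m + 1)) (u : E)) := by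
              rw [pow_succ']; rfl
            rw [hstep, ihm, map_add, _root_.map_smul, _root_.map_smul, hTu, hμv]
            match_scalars <;> (push_cast; ring)
        obtain ⟨m, hm⟩ := exists_nat_gt ((2 * ‖(u : E)‖) / ‖(v : E)‖)
        have hvpos : 0 < ‖(v : E)‖ := by
          rw [norm_pos_iff]
          exact fun h => hv0 (Subtype.ext h)
        have h1 : ‖(u : E)‖ = ‖(T ^ (m + 1)) (u : E)‖ := (u.2 (m + 1)).symm
        have h2 : ‖(((m : ℂ) + 1) * μ ^ m) • (v : E)‖ ≤
            ‖(T ^ (m + 1)) (u : E)‖ + ‖(μ ^ (m + 1)) • (u : E)‖ := by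
          rw [hgrow m]
          calc ‖(((m : ℂ) + 1) * μ ^ m) • (v : E)‖
              = ‖((μ ^ (m + 1)) • (u : E) + (((m : ℂ) + 1) * μ ^ m) • (v : E))
                  - (μ ^ (m + 1)) • (u : E)‖ := by
                congr 1; abel
            _ ≤ _ := norm_sub_le _ _
        have habsm : ‖((m : ℂ) + 1)‖ = (m : ℝ) + 1 := by
          rw [show ((m : ℂ) + 1) = ((m + 1 : ℕ) : ℂ) by push_cast; ring]
          rw [Complex.norm_natCast]
          push_cast; ring
        have h3 : ‖(((m : ℂ) + 1) * μ ^ m) • (v : E)‖ = ((m : ℝ) + 1) * ‖(v : E)‖ := by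
          rw [norm_smul, norm_mul, norm_pow, habsm, habs, one_pow, mul_one]
        have h4 : ‖(μ ^ (m + 1)) • (u : E)‖ = ‖(u : E)‖ := by
          rw [norm_smul, norm_pow, habs, one_pow, one_mul]
        rw [h3, h4, ← h1] at h2
        have h5 : (2 * ‖(u : E)‖) / ‖(v : E)‖ < m := hm
        rw [div_lt_iff₀ hvpos] at h5
        nlinarith [norm_nonneg (u : E)]
  -- conclude
  have htop := Module.End.iSup_maxGenEigenspace_eq_top T'
  set x' : ↥W := ⟨x, hxW⟩ with hx'def
  have hx' : x' ∈ ⨆ μ : ℂ, T'.maxGenEigenspace μ := by rw [htop]; trivial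
  have := Submodule.iSup_induction (motive := fun u : ↥W => (u : E) ∈ Submodule.span ℂ S)
    (fun μ : ℂ => T'.maxGenEigenspace μ) hx'
    (by
      intro μ u hu
      obtain ⟨k, hk⟩ := (Module.End.mem_maxGenEigenspace _ _ _).mp hu
      have heig := heigW μ k u hk
      by_cases hu0 : u = 0
      · rw [hu0]; simpa using Submodule.zero_mem _
      · have habs := heiguni μ u hu0 heig
        refine Submodule.subset_span ?_
        refine ⟨μ, habs, ?_⟩
        rw [← hcoe, heig]; rfl)
    (by simpa using Submodule.zero_mem _)
    (by
      intro a b ha hb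
      push_cast
      exact Submodule.add_mem _ ha hb)
  exact this

end Contraction

-- Part G : transfer to Euclidean space and the main theorem
section Glue

variable {n : ℕ}

lemma trace_conjT_mul {M N : MatC n} :
    (Mᴴ * N).trace = ∑ i, ∑ j, star (M i j) * N i j := by
  rw [Finset.sum_comm]
  simp [Matrix.trace, Matrix.mul_apply, Matrix.diag, Matrix.conjTranspose_apply]

noncomputable def toEuc (s : MatC n) : MatC n →ₗ[ℂ] EuclideanSpace ℂ (Fin n × Fin n) where
  toFun A := WithLp.toLp 2 (fun p => (A * s) p.1 p.2)
  map_add' A B := by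
    ext p
    simp [Matrix.add_mul]
  map_smul' c A := by
    ext p
    simp [Matrix.smul_mul]

noncomputable def fromEuc (t : MatC n) : EuclideanSpace ℂ (Fin n × Fin n) →ₗ[ℂ] MatC n where
  toFun v := (Matrix.of fun i j => v (i, j)) * t
  map_add' u v := by
    have : (Matrix.of fun i j => (u + v) (i, j)) =
        (Matrix.of fun i j => u (i, j)) + (Matrix.of fun i j => v (i, j)) := by
      ext i j; rfl
    simp only [this, Matrix.add_mul]
  map_smul' c v := by
    have : (Matrix.of fun i j => (c • v) (i, j)) =
        c • (Matrix.of fun i j => v (i, j)) := by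
      ext i j; rfl
    simp only [this, Matrix.smul_mul, RingHom.id_apply]

lemma inner_toEuc (s : MatC n) (hherm : s.IsHermitian) (A B : MatC n) :
    (inner ℂ (toEuc s A) (toEuc s B) : ℂ) = (Aᴴ * B * (s * s)).trace := by
  have h1 : (inner ℂ (toEuc s A) (toEuc s B) : ℂ) = ∑ p : Fin n × Fin n,
      star ((A * s) p.1 p.2) * ((B * s) p.1 p.2) := by
    rw [PiLp.inner_apply]
    simp [toEuc, RCLike.inner_apply, mul_comm]
  rw [h1, Fintype.sum_prod_type]
  show ∑ i, ∑ j, star ((A * s) i j) * (B * s) i j = _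
  rw [← trace_conjT_mul]
  rw [Matrix.conjTranspose_mul, hherm.eq]
  rw [show s * Aᴴ * (B * s) = s * (Aᴴ * B * s) by simp [Matrix.mul_assoc]]
  rw [Matrix.trace_mul_comm]
  simp [Matrix.mul_assoc]

end Glue

/-- For a faithful UCP map the attractor subspace coincides with the
decoherence-free algebra. -/
theorem attr_eq_decFree_of_faithful {n : ℕ} (Φ : Module.End ℂ (MatC n))
    (hCP : IsCompletelyPositive Φ) (hunit : Φ 1 = 1) (hfaith : IsFaithful Φ) :
    (attr Φ : Set (MatC n)) = decFree Φ := by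
  obtain ⟨ρ, hρ, hρtr, htr⟩ := hfaith
  obtain ⟨K, hK⟩ := exists_kraus Φ hCP
  apply Set.Subset.antisymm
  · -- attr ⊆ decFree
    intro X hX
    have hle : attr Φ ≤ decFreeSub Φ := by
      apply Submodule.span_le.mpr
      rintro Z ⟨c, habs, heig⟩
      exact eigen_mem_decFree hK hunit hρ htr habs heig
    exact hle hX
  · -- decFree ⊆ attr
    intro X hX
    open scoped MatrixOrder in
    set s := CFC.sqrt ρ with hsdef
    open scoped MatrixOrder in
    have hherm : s.IsHermitian := (CFC.sqrt_nonneg ρ).posSemidef.1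
    open scoped MatrixOrder in
    have hss : s * s = ρ := CFC.sqrt_mul_sqrt_self ρ hρ.posSemidef.nonneg
    have hdet : IsUnit s.det := by
      have hd : ρ.det = s.det * s.det := by rw [← hss, Matrix.det_mul]
      have hne : ρ.det ≠ 0 := ne_of_gt hρ.det_pos
      rw [hd] at hne
      exact isUnit_iff_ne_zero.mpr (left_ne_zero_of_mul hne)
    have hinv1 : s * s⁻¹ = 1 := Matrix.mul_nonsing_inv s hdet
    have hinv2 : s⁻¹ * s = 1 := Matrix.nonsing_inv_mul s hdet
    set e : MatC n ≃ₗ[ℂ] EuclideanSpace ℂ (Fin n × Fin n) :=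
      LinearEquiv.ofLinear (toEuc s) (fromEuc s⁻¹)
        (by
          apply LinearMap.ext
          intro v
          ext p
          show ((Matrix.of fun i j => v (i, j)) * s⁻¹ * s) p.1 p.2 = v p
          rw [Matrix.mul_assoc, hinv2, Matrix.mul_one]
          rfl)
        (by
          apply LinearMap.ext
          intro A
          show (Matrix.of fun i j => (A * s) (i, j).1 (i, j).2) * s⁻¹ = A
          have : (Matrix.of fun i j => (A * s) (i, j).1 (i, j).2) = A * s := by ext i j; rfl
          rw [this, Matrix.mul_assoc, hinv1, Matrix.mul_one]) with hedef
    have heapp : ∀ A : MatC n, e A = toEuc s A := fun A => rfl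
    set Tq : Module.End ℂ (EuclideanSpace ℂ (Fin n × Fin n)) :=
      ((e : MatC n →ₗ[ℂ] EuclideanSpace ℂ (Fin n × Fin n)).comp Φ).comp
        (e.symm : EuclideanSpace ℂ (Fin n × Fin n) →ₗ[ℂ] MatC n) with hTqdef
    have hTq : ∀ A : MatC n, Tq (e A) = e (Φ A) := by
      intro A
      simp [hTqdef, LinearMap.comp_apply, LinearEquiv.symm_apply_apply]
    have hTqpow : ∀ (m : ℕ) (A : MatC n), (Tq ^ m) (e A) = e ((Φ ^ m) A) := by
      intro m
      induction m with
      | zero => intro A; simp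
      | succ m ih =>
        intro A
        have h1 : (Tq ^ (m + 1)) (e A) = (Tq ^ m) (Tq (e A)) := by
          rw [pow_succ, Module.End.mul_apply]
        rw [h1, hTq, ih (Φ A), pow_succ, Module.End.mul_apply]
    have hinner : ∀ A B : MatC n, (inner ℂ (e A) (e B) : ℂ) = (Aᴴ * B * ρ).trace := by
      intro A B
      rw [heapp, heapp, inner_toEuc s hherm, hss]
    have hnorm : ∀ A : MatC n, ‖e A‖ ^ 2 = ((Aᴴ * A * ρ).trace).re := by
      intro A
      have h1 := inner_self_eq_norm_sq_to_K (𝕜 := ℂ) (e A)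
      rw [hinner A A] at h1
      have := congrArg Complex.re h1
      rw [this]
      norm_cast
    have hnormeq : ∀ A B : MatC n, ‖e A‖ ^ 2 = ‖e B‖ ^ 2 → ‖e A‖ = ‖e B‖ := by
      intro A B h
      have := congrArg Real.sqrt h
      rwa [Real.sqrt_sq (norm_nonneg _), Real.sqrt_sq (norm_nonneg _)] at this
    have hcontr : ∀ v, ‖Tq v‖ ≤ ‖v‖ := by
      intro v
      set A := e.symm v with hA
      have hv : e A = v := e.apply_symm_apply v
      have h1 : Tq v = e (Φ A) := by rw [← hv, hTq]
      have hps := kraus_schwarz hK hunit A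
      have hle : ((Φ A)ᴴ * Φ A * ρ).trace ≤ (Aᴴ * A * ρ).trace := by
        have h0 : 0 ≤ ((Φ (Aᴴ * A) - (Φ A)ᴴ * Φ A) * ρ).trace :=
          trace_psd_rho_nonneg hρ hps
        rw [Matrix.sub_mul, Matrix.trace_sub, htr (Aᴴ * A)] at h0
        exact sub_nonneg.mp h0
      have hlere := (Complex.le_def.mp hle).1
      have h2 : ‖Tq v‖ ^ 2 ≤ ‖v‖ ^ 2 := by
        rw [h1, ← hv, hnorm, hnorm]
        exact hlere
      have h3 := Real.sqrt_le_sqrt h2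
      rwa [Real.sqrt_sq (norm_nonneg _), Real.sqrt_sq (norm_nonneg _)] at h3
    have hstarpow : ∀ (m : ℕ) (A : MatC n), (Φ ^ m) Aᴴ = ((Φ ^ m) A)ᴴ := by
      intro m
      induction m with
      | zero => intro A; simp
      | succ m ih =>
        intro A
        have h1 : ∀ B : MatC n, (Φ ^ (m + 1)) B = (Φ ^ m) (Φ B) := fun B => by
          rw [pow_succ, Module.End.mul_apply]
        rw [h1, h1, kraus_star hK, ih]
    have hXnorm : ∀ m : ℕ, ‖(Tq ^ m) (e X)‖ = ‖e X‖ := by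
      intro m
      rw [hTqpow m X]
      apply hnormeq
      rw [hnorm, hnorm]
      congr 1
      rw [← hstarpow m X, ← (hX m Xᴴ).1]
      exact faithful_iterate htr m (Xᴴ * X)
    have hmem := mem_span_unimodular_of_norm_preserved Tq hcontr (e X) hXnorm
    have himg : {v : EuclideanSpace ℂ (Fin n × Fin n) | ∃ c : ℂ,
        ‖c‖ = 1 ∧ Tq v = c • v}
        = ⇑e '' {A : MatC n | ∃ c : ℂ, ‖c‖ = 1 ∧ Φ A = c • A} := by
      ext v
      constructor
      · rintro ⟨c, habs, hv⟩
        refine ⟨e.symm v, ⟨c, habs, ?_⟩, e.apply_symm_apply v⟩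
        have h1 : Tq v = e (Φ (e.symm v)) := by
          conv_lhs => rw [← e.apply_symm_apply v]
          rw [hTq]
        rw [h1] at hv
        have h2 : e (Φ (e.symm v)) = e (c • e.symm v) := by
          rw [hv, _root_.map_smul, e.apply_symm_apply]
        exact e.injective h2
      · rintro ⟨A, ⟨c, habs, hA⟩, rfl⟩
        exact ⟨c, habs, by rw [hTq, hA, _root_.map_smul]⟩
    rw [himg] at hmem
    erw [Submodule.span_image (e : MatC n →ₗ[ℂ] EuclideanSpace ℂ (Fin n × Fin n))] at hmem
    obtain ⟨Y, hY, hYX⟩ := Submodule.mem_map.mp hmem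
    have : Y = X := by
      apply e.injective
      simpa using hYX
    rw [← this]
    exact hY
end
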